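/- arXiv:0904.1312 — 4 statements merged into one kernel-verified Lean document; each statement's English description precedes it below -/
import Mathlib

section
/- Bias of empirical means: under the positive Ricci curvature assumption with constant κ ∈ (0,1], for every Lipschitz function f : 𝒳 → ℝ, every starting point x ∈ 𝒳 and all integers T₀ ≥ 0, T ≥ 1, the bias of the empirical mean satisfies |E_x π̂(f) − π(f)| ≤ ((1−κ)^{T₀+1} / (κ T)) · E(x) · ‖f‖_Lip. -/
open MeasureTheory ENNReal
open scoped NNReal

noncomputable section

variable {X : Type*} [MetricSpace X] [MeasurableSpace X]

/-- The L¹ Wasserstein distance between two measures on a metric space,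
defined as the infimum of the transport cost over all couplings. -/
def W1 (μ ν : Measure X) : ℝ≥0∞ :=
  ⨅ (ξ : Measure (X × X)) (_ : ξ.map Prod.fst = μ) (_ : ξ.map Prod.snd = ν),
    ∫⁻ p, edist p.1 p.2 ∂ξ

/-- The Markov kernel `P` has (coarse) Ricci curvature at least `κ`:
`W₁(P_x, P_y) ≤ (1-κ) d(x,y)` for all `x, y`. -/
def PosCurvature (P : X → Measure X) (κ : ℝ) : Prop :=
  ∀ x y : X, W1 (P x) (P y) ≤ ENNReal.ofReal ((1 - κ) * dist x y)

/-- `N`-step transition kernel: `stepN P 0 x = δ_x` and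
`stepN P (N+1) x = ∫ P_z(dy) (stepN P N x)(dz)`. -/
def stepN (P : X → Measure X) : ℕ → X → Measure X
  | 0 => fun x => Measure.dirac x
  | n + 1 => fun x => (stepN P n x).bind P

/-- Iterated averaging operator `P^N f (x) = ∫ f d(P_x^N)`. -/
def avgN (P : X → Measure X) (n : ℕ) (f : X → ℝ) (x : X) : ℝ :=
  ∫ y, f y ∂(stepN P n x)

/-- Law of the trajectory `(X_1, …, X_n)` of the Markov chain started at `x`. -/
def pathLaw (P : X → Measure X) : (n : ℕ) → X → Measure (Fin n → X)
  | 0 => fun _ => Measure.dirac (fun i : Fin 0 => i.elim0)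
  | n + 1 => fun x => (P x).bind fun y => (pathLaw P n y).map (fun p => Fin.cons y p)

/-- Empirical mean `π̂(f) = (1/T) ∑_{k=T₀+1}^{T₀+T} f(X_k)`, as a function of the
trajectory `(X_1, …, X_{T₀+T})`. -/
def empMean (f : X → ℝ) (T₀ T : ℕ) (p : Fin (T₀ + T) → X) : ℝ :=
  (1 / (T : ℝ)) * ∑ i : Fin (T₀ + T), if T₀ ≤ (i : ℕ) then f (p i) else 0

/-- Expectation `E_x π̂(f)` of the empirical mean for the chain started at `x`. -/
def empExp (P : X → Measure X) (f : X → ℝ) (T₀ T : ℕ) (x : X) : ℝ :=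
  ∫ p, empMean f T₀ T p ∂(pathLaw P (T₀ + T) x)

/-- Variance `Var_x π̂(f)` of the empirical mean for the chain started at `x`. -/
def empVar (P : X → Measure X) (f : X → ℝ) (T₀ T : ℕ) (x : X) : ℝ :=
  ∫ p, (empMean f T₀ T p - empExp P f T₀ T x) ^ 2 ∂(pathLaw P (T₀ + T) x)

/-- Lipschitz seminorm `‖f‖_Lip = sup_{x ≠ y} |f(x) - f(y)|/d(x,y)`, as the least
Lipschitz constant of `f`. -/
def lipNorm (f : X → ℝ) : ℝ :=
  sInf {K : ℝ | ∀ x y : X, |f x - f y| ≤ K * dist x y}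

/-- Coarse diffusion constant `σ(x)² = ½ ∬ d(y,z)² P_x(dy) P_x(dz)`. -/
def diffSq (P : X → Measure X) (x : X) : ℝ :=
  (1 / 2) * ∫ y, ∫ z, dist y z ^ 2 ∂(P x) ∂(P x)

/-- Local dimension `n_x`. -/
def localDim (P : X → Measure X) (x : X) : ℝ :=
  sInf {r : ℝ | ∃ f : X → ℝ, (∃ K : ℝ≥0, LipschitzWith K f) ∧
    (∫ y, ∫ z, |f y - f z| ^ 2 ∂(P x) ∂(P x)) ≠ 0 ∧
    r = (∫ y, ∫ z, dist y z ^ 2 ∂(P x) ∂(P x)) /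
        (∫ y, ∫ z, |f y - f z| ^ 2 ∂(P x) ∂(P x))}

/-- Support of a measure: the set of points all of whose open neighborhoods have
positive measure. -/
def msupp (μ : Measure X) : Set X :=
  {x : X | ∀ U : Set X, IsOpen U → x ∈ U → μ U ≠ 0}

/-- Granularity `σ_∞ = ½ sup_x diam (supp P_x)`, valued in `ℝ≥0∞`. -/
def granularity (P : X → Measure X) : ℝ≥0∞ :=
  (1 / 2) * ⨆ x : X, EMetric.diam (msupp (P x))

/-- Eccentricity `E(x) = ∫ d(x,y) π(dy)`. -/
def ecc (π : Measure X) (x : X) : ℝ := ∫ y, dist x y ∂π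


section GeneralHelpers

variable {α β γ : Type*} [MeasurableSpace α] [MeasurableSpace β] [MeasurableSpace γ]

lemma Measure.map_bind' (μ : Measure α) (κ : α → Measure β) (g : β → γ)
    (hκ : Measurable κ) (hg : Measurable g) :
    (μ.bind κ).map g = μ.bind (fun a => (κ a).map g) := by
  ext s hs
  have hκg : Measurable fun a => (κ a).map g := (Measure.measurable_map g hg).comp hκ
  rw [Measure.map_apply hg hs, Measure.bind_apply (hg hs) hκ.aemeasurable, Measure.bind_apply hs hκg.aemeasurable]
  exact lintegral_congr fun a => (Measure.map_apply hg hs).symm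

lemma isProbabilityMeasure_bind' (μ : Measure α) (κ : α → Measure β)
    (hμ : IsProbabilityMeasure μ) (hκ : Measurable κ)
    (hp : ∀ a, IsProbabilityMeasure (κ a)) : IsProbabilityMeasure (μ.bind κ) := by
  constructor
  rw [Measure.bind_apply MeasurableSet.univ hκ.aemeasurable]
  simp [measure_univ]

lemma integral_bind' (μ : Measure α) (κ : α → Measure β) (hκ : Measurable κ)
    (g : β → ℝ) (hg : Measurable g)
    (hint : (∫⁻ b, ‖g b‖₊ ∂(μ.bind κ)) ≠ ⊤) :
    ∫ b, g b ∂(μ.bind κ) = ∫ a, ∫ b, g b ∂(κ a) ∂μ := by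
  have hNmeas : Measurable fun b => (‖g b‖₊ : ℝ≥0∞) := hg.nnnorm.coe_nnreal_ennreal
  have hPmeas : Measurable fun b => ENNReal.ofReal (g b) := hg.ennreal_ofReal
  have hMmeas : Measurable fun b => ENNReal.ofReal (-(g b)) := hg.neg.ennreal_ofReal
  set Fp : α → ℝ≥0∞ := fun a => ∫⁻ b, ENNReal.ofReal (g b) ∂κ a with hFp
  set Fm : α → ℝ≥0∞ := fun a => ∫⁻ b, ENNReal.ofReal (-(g b)) ∂κ a with hFm
  set FN : α → ℝ≥0∞ := fun a => ∫⁻ b, (‖g b‖₊ : ℝ≥0∞) ∂κ a with hFN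
  have hFpm : Measurable Fp := (Measure.measurable_lintegral hPmeas).comp hκ
  have hFmm : Measurable Fm := (Measure.measurable_lintegral hMmeas).comp hκ
  have hFNm : Measurable FN := (Measure.measurable_lintegral hNmeas).comp hκ
  have hNbind : (∫⁻ a, FN a ∂μ) ≠ ⊤ := by
    rw [← Measure.lintegral_bind hκ.aemeasurable hNmeas.aemeasurable]; exact hint
  have hFNfin : ∀ᵐ a ∂μ, FN a < ⊤ := ae_lt_top hFNm hNbind
  have hple : ∀ a, Fp a ≤ FN a := fun a =>
    lintegral_mono fun b => Real.ofReal_le_enorm (g b)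
  have hmle : ∀ a, Fm a ≤ FN a := fun a =>
    lintegral_mono fun b => by
      have h := Real.ofReal_le_enorm (-(g b)); rw [enorm_neg] at h; exact h
  have hInt : Integrable g (μ.bind κ) :=
    ⟨hg.aestronglyMeasurable, (hasFiniteIntegral_def _ _).2 hint.lt_top⟩
  rw [integral_eq_lintegral_pos_part_sub_lintegral_neg_part hInt,
    Measure.lintegral_bind hκ.aemeasurable hPmeas.aemeasurable, Measure.lintegral_bind hκ.aemeasurable hMmeas.aemeasurable]
  have hFpae : ∀ᵐ a ∂μ, Fp a < ⊤ := hFNfin.mono fun a ha => lt_of_le_of_lt (hple a) ha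
  have hFmae : ∀ᵐ a ∂μ, Fm a < ⊤ := hFNfin.mono fun a ha => lt_of_le_of_lt (hmle a) ha
  rw [← integral_toReal hFpm.aemeasurable hFpae, ← integral_toReal hFmm.aemeasurable hFmae,
    ← integral_sub
      (integrable_toReal_of_lintegral_ne_top hFpm.aemeasurable
        (ne_top_of_le_ne_top hNbind (lintegral_mono hple)))
      (integrable_toReal_of_lintegral_ne_top hFmm.aemeasurable
        (ne_top_of_le_ne_top hNbind (lintegral_mono hmle)))]
  refine integral_congr_ae ?_
  filter_upwards [hFNfin] with a ha
  have hga : Integrable g (κ a) := ⟨hg.aestronglyMeasurable, (hasFiniteIntegral_def _ _).2 ha⟩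
  exact (integral_eq_lintegral_pos_part_sub_lintegral_neg_part hga).symm

end GeneralHelpers
set_option linter.unusedSectionVars false
section LipHelpers

variable {X : Type*} [MetricSpace X] [MeasurableSpace X]

lemma lipschitzWith_of_bound {g : X → ℝ} {L : ℝ} (hL : 0 ≤ L)
    (hg : ∀ a b, |g a - g b| ≤ L * dist a b) : LipschitzWith (Real.toNNReal L) g := by
  refine LipschitzWith.of_dist_le_mul fun a b => ?_
  rw [Real.dist_eq]
  have : (Real.toNNReal L : ℝ) = L := Real.coe_toNNReal L hL
  rw [this]
  exact hg a b

lemma lipNorm_nonneg' (f : X → ℝ) (hf : ∃ K : ℝ≥0, LipschitzWith K f) : 0 ≤ lipNorm f := by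
  obtain ⟨K, hK⟩ := hf
  have hKmem : (K : ℝ) ∈ {K : ℝ | ∀ x y : X, |f x - f y| ≤ K * dist x y} := by
    intro a b
    rw [← Real.dist_eq]
    exact hK.dist_le_mul a b
  by_cases h : ∃ a b : X, a ≠ b
  · obtain ⟨a, b, hab⟩ := h
    have hd : 0 < dist a b := dist_pos.2 hab
    refine le_csInf ⟨_, hKmem⟩ fun K' hK' => ?_
    have h0 : 0 ≤ K' * dist a b := (abs_nonneg _).trans (hK' a b)
    nlinarith
  · push_neg at h
    have huniv : {K : ℝ | ∀ x y : X, |f x - f y| ≤ K * dist x y} = Set.univ := by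
      refine Set.eq_univ_of_forall fun K' a b => ?_
      simp [h a b]
    rw [lipNorm, huniv, Real.sInf_of_not_bddBelow not_bddBelow_univ]

lemma abs_sub_le_lipNorm (f : X → ℝ) (hf : ∃ K : ℝ≥0, LipschitzWith K f) (a b : X) :
    |f a - f b| ≤ lipNorm f * dist a b := by
  obtain ⟨K, hK⟩ := hf
  have hKmem : (K : ℝ) ∈ {K : ℝ | ∀ x y : X, |f x - f y| ≤ K * dist x y} := by
    intro a b
    rw [← Real.dist_eq]
    exact hK.dist_le_mul a b
  rcases eq_or_ne a b with rfl | hab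
  · simp
  · have hd : 0 < dist a b := dist_pos.2 hab
    have h1 : |f a - f b| / dist a b ≤ lipNorm f :=
      le_csInf ⟨_, hKmem⟩ fun K' hK' => (div_le_iff₀ hd).2 (hK' a b)
    calc |f a - f b| = (|f a - f b| / dist a b) * dist a b := by field_simp
    _ ≤ lipNorm f * dist a b := mul_le_mul_of_nonneg_right h1 hd.le

lemma integrable_of_lip [OpensMeasurableSpace X] (μ : Measure X) [IsProbabilityMeasure μ]
    (y : X) (hmom : (∫⁻ z, edist y z ∂μ) ≠ ⊤)
    {g : X → ℝ} {L : ℝ} (hL : 0 ≤ L) (hg : ∀ a b, |g a - g b| ≤ L * dist a b) :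
    Integrable g μ := by
  have hgc : Continuous g := (lipschitzWith_of_bound hL hg).continuous
  refine ⟨hgc.measurable.aestronglyMeasurable, (hasFiniteIntegral_def _ _).2 ?_⟩
  have hb : ∀ z, (‖g z‖₊ : ℝ≥0∞) ≤ ENNReal.ofReal |g y| + ENNReal.ofReal L * edist y z := by
    intro z
    rw [← enorm_eq_nnnorm, Real.enorm_eq_ofReal_abs, edist_dist, ← ENNReal.ofReal_mul hL,
      ← ENNReal.ofReal_add (abs_nonneg _) (mul_nonneg hL dist_nonneg)]
    apply ENNReal.ofReal_le_ofReal
    calc |g z| ≤ |g y| + |g z - g y| := by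
          have := abs_sub_abs_le_abs_sub (g z) (g y)
          linarith [abs_nonneg (g z - g y)]
    _ ≤ |g y| + L * dist y z := by
          have := hg z y
          rw [dist_comm z y] at this
          linarith
  calc (∫⁻ z, (‖g z‖₊ : ℝ≥0∞) ∂μ)
      ≤ ∫⁻ z, (ENNReal.ofReal |g y| + ENNReal.ofReal L * edist y z) ∂μ := lintegral_mono hb
    _ = ENNReal.ofReal |g y| + ENNReal.ofReal L * ∫⁻ z, edist y z ∂μ := by
        rw [lintegral_add_left measurable_const,
          lintegral_const_mul _ (show Measurable fun z : X => edist y z from (continuous_const.edist continuous_id).measurable),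
          lintegral_const, measure_univ, mul_one]
    _ < ⊤ := by
        refine ENNReal.add_lt_top.2 ⟨ENNReal.ofReal_lt_top, ?_⟩
        exact ENNReal.mul_lt_top ENNReal.ofReal_lt_top hmom.lt_top

end LipHelpers
section ContractHelpers

variable {X : Type*} [MetricSpace X] [MeasurableSpace X] [SecondCountableTopology X] [BorelSpace X]

lemma step_contract (P : X → Measure X) (hPprob : ∀ x, IsProbabilityMeasure (P x))
    (hPmom : ∀ x y : X, (∫⁻ z, edist y z ∂(P x)) ≠ ⊤)
    {κ : ℝ} (hκ1 : κ ≤ 1) (hcurv : PosCurvature P κ)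
    {g : X → ℝ} {L : ℝ} (hL : 0 ≤ L) (hg : ∀ a b, |g a - g b| ≤ L * dist a b)
    (x y : X) :
    |(∫ z, g z ∂P x) - ∫ z, g z ∂P y| ≤ (1 - κ) * L * dist x y := by
  haveI := hPprob x; haveI := hPprob y
  have hκ0' : 0 ≤ 1 - κ := by linarith
  have hgc : Continuous g := (lipschitzWith_of_bound hL hg).continuous
  rcases hL.eq_or_lt with hL0 | hLpos
  · have hconst : ∀ a b : X, g a = g b := by
      intro a b
      have h1 := hg a b
      rw [← hL0, zero_mul] at h1
      exact sub_eq_zero.1 (abs_eq_zero.1 (le_antisymm h1 (abs_nonneg _)))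
    have heq : (∫ z, g z ∂P x) = ∫ z, g z ∂P y := by
      have hgy : g = fun _ => g y := funext fun a => hconst a y
      rw [hgy]; simp [integral_const, measure_univ]
    rw [heq, sub_self, abs_zero]
    exact mul_nonneg (mul_nonneg hκ0' hL) dist_nonneg
  · set Δ := (∫ z, g z ∂P x) - ∫ z, g z ∂P y with hΔ
    have key : ENNReal.ofReal (|Δ| / L) ≤ W1 (P x) (P y) := by
      rw [W1]
      refine le_iInf fun ξ => le_iInf fun h1 => le_iInf fun h2 => ?_
      by_cases hfin : (∫⁻ p, edist p.1 p.2 ∂ξ) = ⊤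
      · rw [hfin]; exact le_top
      have hprobξ : IsProbabilityMeasure ξ := by
        constructor
        have huniv : ξ.map Prod.fst Set.univ = 1 := by rw [h1]; exact measure_univ
        rwa [Measure.map_apply measurable_fst MeasurableSet.univ, Set.preimage_univ] at huniv
      have hD : Integrable (fun p : X × X => dist p.1 p.2) ξ := by
        refine ⟨(continuous_fst.dist continuous_snd).measurable.aestronglyMeasurable,
          (hasFiniteIntegral_def _ _).2 ?_⟩
        have heq : ∀ p : X × X, (‖dist p.1 p.2‖₊ : ℝ≥0∞) = edist p.1 p.2 := fun p => by
          rw [← enorm_eq_nnnorm, Real.enorm_eq_ofReal dist_nonneg, ← edist_dist]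
        show (∫⁻ p : X × X, (‖dist p.1 p.2‖₊ : ℝ≥0∞) ∂ξ) < ⊤
        rw [lintegral_congr heq]
        exact Ne.lt_top hfin
      have hgx : Integrable g (P x) := integrable_of_lip (P x) x (hPmom x x) hL hg
      have hgy : Integrable g (P y) := integrable_of_lip (P y) y (hPmom y y) hL hg
      have hg1 : Integrable (fun p : X × X => g p.1) ξ :=
        (integrable_map_measure hgc.measurable.aestronglyMeasurable
          measurable_fst.aemeasurable).mp (by rw [h1]; exact hgx)
      have hg2 : Integrable (fun p : X × X => g p.2) ξ :=
        (integrable_map_measure hgc.measurable.aestronglyMeasurable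
          measurable_snd.aemeasurable).mp (by rw [h2]; exact hgy)
      have hΔeq : Δ = ∫ p, (g p.1 - g p.2) ∂ξ := by
        rw [integral_sub hg1 hg2, hΔ]
        congr 1
        · rw [← h1, integral_map measurable_fst.aemeasurable
            hgc.measurable.aestronglyMeasurable]
        · rw [← h2, integral_map measurable_snd.aemeasurable
            hgc.measurable.aestronglyMeasurable]
      have habs : |Δ| ≤ L * ∫ p, dist p.1 p.2 ∂ξ := by
        rw [hΔeq]
        have h1' := norm_integral_le_integral_norm (μ := ξ)
          (f := fun p : X × X => g p.1 - g p.2)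
        simp only [Real.norm_eq_abs] at h1'
        refine h1'.trans ?_
        rw [← integral_const_mul]
        exact integral_mono (hg1.sub hg2).abs (hD.const_mul L) fun p => hg p.1 p.2
      have hratio : |Δ| / L ≤ ∫ p, dist p.1 p.2 ∂ξ :=
        (div_le_iff₀' hLpos).2 habs
      calc ENNReal.ofReal (|Δ| / L)
          ≤ ENNReal.ofReal (∫ p, dist p.1 p.2 ∂ξ) := ENNReal.ofReal_le_ofReal hratio
        _ = ∫⁻ p, edist p.1 p.2 ∂ξ := by
            rw [ofReal_integral_eq_lintegral_ofReal hD (ae_of_all _ fun p => dist_nonneg)]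
            exact lintegral_congr fun p => (edist_dist _ _).symm
    have hW := key.trans (hcurv x y)
    have h2 : |Δ| / L ≤ (1 - κ) * dist x y := by
      rwa [ENNReal.ofReal_le_ofReal_iff (mul_nonneg hκ0' dist_nonneg)] at hW
    calc |Δ| = (|Δ| / L) * L := by field_simp
    _ ≤ ((1 - κ) * dist x y) * L := mul_le_mul_of_nonneg_right h2 hL
    _ = (1 - κ) * L * dist x y := by ring

end ContractHelpers
section StepNHelpers

variable {X : Type*} [MetricSpace X] [MeasurableSpace X] [SecondCountableTopology X] [BorelSpace X]
variable {P : X → Measure X}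

lemma dist_lip (y : X) : ∀ a b : X, |dist y a - dist y b| ≤ 1 * dist a b := fun a b => by
  rw [one_mul, dist_comm y a, dist_comm y b]
  exact abs_dist_sub_le a b y

lemma integrable_dist_of_mom (μ : Measure X) [IsProbabilityMeasure μ] (y : X)
    (hmom : (∫⁻ z, edist y z ∂μ) ≠ ⊤) : Integrable (fun z => dist y z) μ :=
  integrable_of_lip μ y hmom zero_le_one (dist_lip y)

lemma lintegral_edist_eq_ofReal (μ : Measure X) [IsProbabilityMeasure μ] (y : X)
    (hmom : (∫⁻ z, edist y z ∂μ) ≠ ⊤) :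
    (∫⁻ z, edist y z ∂μ) = ENNReal.ofReal (∫ z, dist y z ∂μ) := by
  rw [ofReal_integral_eq_lintegral_ofReal (integrable_dist_of_mom μ y hmom)
    (ae_of_all _ fun z => dist_nonneg)]
  exact lintegral_congr fun z => edist_dist _ _

lemma measurable_stepN (hPmeas : Measurable P) (n : ℕ) : Measurable (stepN P n) := by
  induction n with
  | zero => exact Measure.measurable_dirac
  | succ n ih => exact (Measure.measurable_bind' hPmeas).comp ih

lemma isProbabilityMeasure_stepN (hPmeas : Measurable P)
    (hPprob : ∀ x, IsProbabilityMeasure (P x)) (n : ℕ) (x : X) :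
    IsProbabilityMeasure (stepN P n x) := by
  induction n with
  | zero => simp only [stepN]; infer_instance
  | succ n ih => exact isProbabilityMeasure_bind' _ _ ih hPmeas hPprob

lemma stepN_succ' (hPmeas : Measurable P) (n : ℕ) (x : X) :
    stepN P (n + 1) x = (P x).bind (stepN P n) := by
  induction n generalizing x with
  | zero =>
      simp only [stepN]
      rw [Measure.dirac_bind hPmeas]
      exact (Measure.bind_dirac).symm
  | succ n ih =>
      show (stepN P (n + 1) x).bind P = _
      rw [ih x, Measure.bind_bind (measurable_stepN hPmeas n).aemeasurable hPmeas.aemeasurable]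
      rfl

lemma stepN_mom (hPmeas : Measurable P) (hPprob : ∀ x, IsProbabilityMeasure (P x))
    (hPmom : ∀ x y : X, (∫⁻ z, edist y z ∂(P x)) ≠ ⊤)
    {κ : ℝ} (hκ0 : 0 < κ) (hκ1 : κ ≤ 1) (hcurv : PosCurvature P κ)
    (n : ℕ) (x y : X) : (∫⁻ z, edist y z ∂(stepN P n x)) ≠ ⊤ := by
  induction n generalizing x with
  | zero =>
      simp only [stepN]
      rw [lintegral_dirac' x
        (show Measurable fun z : X => edist y z from
          (continuous_const.edist continuous_id).measurable)]
      exact edist_ne_top y x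
  | succ n ih =>
      haveI := isProbabilityMeasure_stepN hPmeas hPprob n x
      simp only [stepN]
      rw [Measure.lintegral_bind hPmeas.aemeasurable
        (show Measurable fun z : X => edist y z from
          (continuous_const.edist continuous_id).measurable).aemeasurable]
      set gr : X → ℝ := fun w => ∫ z, dist y z ∂P w with hgr
      have hG : ∀ w, (∫⁻ z, edist y z ∂P w) = ENNReal.ofReal (gr w) := fun w => by
        haveI := hPprob w
        exact lintegral_edist_eq_ofReal (P w) y (hPmom w y)
      have hgr_lip : ∀ a b : X, |gr a - gr b| ≤ (1 - κ) * 1 * dist a b :=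
        step_contract P hPprob hPmom hκ1 hcurv zero_le_one (dist_lip y)
      have hbw : ∀ w : X, ENNReal.ofReal (gr w)
          ≤ ENNReal.ofReal (gr y) + edist y w := by
        intro w
        have h1 : gr w ≤ gr y + dist y w := by
          have h2 := (abs_le.1 (hgr_lip w y)).2
          have h3 : (1 - κ) * 1 * dist w y ≤ dist w y := by
            nlinarith [dist_nonneg (x := w) (y := y)]
          rw [dist_comm y w]; linarith
        calc ENNReal.ofReal (gr w) ≤ ENNReal.ofReal (gr y + dist y w) :=
              ENNReal.ofReal_le_ofReal h1
          _ ≤ ENNReal.ofReal (gr y) + ENNReal.ofReal (dist y w) :=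
              ENNReal.ofReal_add_le
          _ = ENNReal.ofReal (gr y) + edist y w := by rw [edist_dist]
      have hle : (∫⁻ w, (∫⁻ z, edist y z ∂P w) ∂stepN P n x)
          ≤ ENNReal.ofReal (gr y) + ∫⁻ w, edist y w ∂stepN P n x := calc
        (∫⁻ w, (∫⁻ z, edist y z ∂P w) ∂stepN P n x)
          = ∫⁻ w, ENNReal.ofReal (gr w) ∂stepN P n x := lintegral_congr fun w => hG w
        _ ≤ ∫⁻ w, (ENNReal.ofReal (gr y) + edist y w) ∂stepN P n x := lintegral_mono hbw
        _ = ENNReal.ofReal (gr y) + ∫⁻ w, edist y w ∂stepN P n x := by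
            rw [lintegral_add_left measurable_const, lintegral_const, measure_univ, mul_one]
      exact ne_top_of_le_ne_top (ENNReal.add_ne_top.2 ⟨ENNReal.ofReal_ne_top, ih x⟩) hle

lemma integrable_stepN (hPmeas : Measurable P) (hPprob : ∀ x, IsProbabilityMeasure (P x))
    (hPmom : ∀ x y : X, (∫⁻ z, edist y z ∂(P x)) ≠ ⊤)
    {κ : ℝ} (hκ0 : 0 < κ) (hκ1 : κ ≤ 1) (hcurv : PosCurvature P κ)
    {f : X → ℝ} {L : ℝ} (hL : 0 ≤ L) (hf : ∀ a b, |f a - f b| ≤ L * dist a b)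
    (n : ℕ) (x : X) : Integrable f (stepN P n x) := by
  haveI := isProbabilityMeasure_stepN hPmeas hPprob n x
  exact integrable_of_lip _ x (stepN_mom hPmeas hPprob hPmom hκ0 hκ1 hcurv n x x) hL hf

lemma avgN_succ' (hPmeas : Measurable P) (hPprob : ∀ x, IsProbabilityMeasure (P x))
    (hPmom : ∀ x y : X, (∫⁻ z, edist y z ∂(P x)) ≠ ⊤)
    {κ : ℝ} (hκ0 : 0 < κ) (hκ1 : κ ≤ 1) (hcurv : PosCurvature P κ)
    {f : X → ℝ} {L : ℝ} (hL : 0 ≤ L) (hf : ∀ a b, |f a - f b| ≤ L * dist a b)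
    (n : ℕ) (x : X) : avgN P (n + 1) f x = ∫ y, avgN P n f y ∂P x := by
  have hfc : Continuous f := (lipschitzWith_of_bound hL hf).continuous
  have hint := integrable_stepN hPmeas hPprob hPmom hκ0 hκ1 hcurv hL hf (n + 1) x
  have hfin : (∫⁻ b, (‖f b‖₊ : ℝ≥0∞) ∂((P x).bind (stepN P n))) ≠ ⊤ := by
    rw [← stepN_succ' hPmeas n x]
    exact ((hasFiniteIntegral_def _ _).1 hint.2).ne
  rw [avgN, stepN_succ' hPmeas n x,
    integral_bind' (P x) (stepN P n) (measurable_stepN hPmeas n) f hfc.measurable hfin]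
  rfl

lemma avgN_zero (f : X → ℝ) (x : X) : avgN P 0 f x = f x := by
  simp only [avgN, stepN]
  exact integral_dirac f x

lemma avgN_lip (hPmeas : Measurable P) (hPprob : ∀ x, IsProbabilityMeasure (P x))
    (hPmom : ∀ x y : X, (∫⁻ z, edist y z ∂(P x)) ≠ ⊤)
    {κ : ℝ} (hκ0 : 0 < κ) (hκ1 : κ ≤ 1) (hcurv : PosCurvature P κ)
    {f : X → ℝ} {L : ℝ} (hL : 0 ≤ L) (hf : ∀ a b, |f a - f b| ≤ L * dist a b)
    (n : ℕ) : ∀ a b : X, |avgN P n f a - avgN P n f b| ≤ ((1 - κ) ^ n * L) * dist a b := by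
  induction n with
  | zero =>
      intro a b
      simpa only [avgN_zero, pow_zero, one_mul] using hf a b
  | succ n ih =>
      intro a b
      rw [avgN_succ' hPmeas hPprob hPmom hκ0 hκ1 hcurv hL hf n a,
        avgN_succ' hPmeas hPprob hPmom hκ0 hκ1 hcurv hL hf n b]
      have h := step_contract P hPprob hPmom hκ1 hcurv
        (mul_nonneg (pow_nonneg (by linarith) n) hL) ih a b
      refine h.trans (le_of_eq (by ring))

end StepNHelpers
section BiasHelpers

variable {X : Type*} [MetricSpace X] [MeasurableSpace X] [SecondCountableTopology X] [BorelSpace X]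
variable {P : X → Measure X}

lemma avgN_invariant (hPmeas : Measurable P) (hPprob : ∀ x, IsProbabilityMeasure (P x))
    (hPmom : ∀ x y : X, (∫⁻ z, edist y z ∂(P x)) ≠ ⊤)
    {κ : ℝ} (hκ0 : 0 < κ) (hκ1 : κ ≤ 1) (hcurv : PosCurvature P κ)
    (π : Measure X) (hπprob : IsProbabilityMeasure π) (hπinv : π.bind P = π)
    (hπmom : ∀ y : X, (∫⁻ z, edist y z ∂π) ≠ ⊤) (x₀ : X)
    {f : X → ℝ} {L : ℝ} (hL : 0 ≤ L) (hf : ∀ a b, |f a - f b| ≤ L * dist a b) :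
    ∀ n, (∫ y, avgN P n f y ∂π) = ∫ y, f y ∂π := by
  haveI := hπprob
  intro n
  induction n with
  | zero => simp only [avgN_zero]
  | succ n ih =>
      have hlip := avgN_lip hPmeas hPprob hPmom hκ0 hκ1 hcurv hL hf n
      have hLn : 0 ≤ (1 - κ) ^ n * L := mul_nonneg (pow_nonneg (by linarith) n) hL
      have hmeas_avg : Measurable (avgN P n f) :=
        (lipschitzWith_of_bound hLn hlip).continuous.measurable
      have hfin : (∫⁻ b, (‖avgN P n f b‖₊ : ℝ≥0∞) ∂(π.bind P)) ≠ ⊤ := by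
        rw [hπinv]
        exact ((hasFiniteIntegral_def _ _).1
          (integrable_of_lip π x₀ (hπmom x₀) hLn hlip).2).ne
      calc (∫ y, avgN P (n + 1) f y ∂π)
          = ∫ x, ∫ y, avgN P n f y ∂P x ∂π :=
            integral_congr_ae (ae_of_all _ fun x =>
              avgN_succ' hPmeas hPprob hPmom hκ0 hκ1 hcurv hL hf n x)
        _ = ∫ y, avgN P n f y ∂(π.bind P) :=
            (integral_bind' π P hPmeas (avgN P n f) hmeas_avg hfin).symm
        _ = ∫ y, avgN P n f y ∂π := by rw [hπinv]
        _ = ∫ y, f y ∂π := ih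

lemma avgN_bias (hPmeas : Measurable P) (hPprob : ∀ x, IsProbabilityMeasure (P x))
    (hPmom : ∀ x y : X, (∫⁻ z, edist y z ∂(P x)) ≠ ⊤)
    {κ : ℝ} (hκ0 : 0 < κ) (hκ1 : κ ≤ 1) (hcurv : PosCurvature P κ)
    (π : Measure X) (hπprob : IsProbabilityMeasure π) (hπinv : π.bind P = π)
    (hπmom : ∀ y : X, (∫⁻ z, edist y z ∂π) ≠ ⊤)
    {f : X → ℝ} {L : ℝ} (hL : 0 ≤ L) (hf : ∀ a b, |f a - f b| ≤ L * dist a b)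
    (x : X) (n : ℕ) :
    |avgN P n f x - ∫ y, f y ∂π| ≤ ((1 - κ) ^ n * L) * ecc π x := by
  haveI := hπprob
  rw [← avgN_invariant hPmeas hPprob hPmom hκ0 hκ1 hcurv π hπprob hπinv hπmom x hL hf n]
  set g := avgN P n f with hgdef
  have hglip := avgN_lip hPmeas hPprob hPmom hκ0 hκ1 hcurv hL hf n
  have hLn : 0 ≤ (1 - κ) ^ n * L := mul_nonneg (pow_nonneg (by linarith) n) hL
  have hgint : Integrable g π := integrable_of_lip π x (hπmom x) hLn hglip
  have hdint : Integrable (fun y => dist x y) π := integrable_dist_of_mom π x (hπmom x)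
  have hsub : g x - ∫ y, g y ∂π = ∫ y, (g x - g y) ∂π := by
    rw [integral_sub (integrable_const _) hgint, integral_const, probReal_univ, one_smul]
  rw [hsub]
  have h1 := norm_integral_le_integral_norm (μ := π) (f := fun y => g x - g y)
  simp only [Real.norm_eq_abs] at h1
  refine h1.trans ?_
  calc (∫ y, |g x - g y| ∂π)
      ≤ ∫ y, ((1 - κ) ^ n * L) * dist x y ∂π :=
        integral_mono ((integrable_const (g x)).sub hgint).abs
          (hdint.const_mul _) fun y => hglip x y
    _ = ((1 - κ) ^ n * L) * ecc π x := by rw [integral_const_mul]; rfl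

end BiasHelpers
section PathLawHelpers

variable {X : Type*} [MetricSpace X] [MeasurableSpace X] [SecondCountableTopology X] [BorelSpace X]
variable {P : X → Measure X}

lemma measurable_cons_uncurry (n : ℕ) :
    Measurable fun q : X × (Fin n → X) => (Fin.cons q.1 q.2 : Fin (n + 1) → X) := by
  refine measurable_pi_iff.mpr fun i => ?_
  refine Fin.cases ?_ ?_ i
  · simpa only [Fin.cons_zero] using measurable_fst
  · intro j
    simp only [Fin.cons_succ]; exact (measurable_pi_apply j).comp measurable_snd

lemma measurable_cons_left {n : ℕ} (y : X) :
    Measurable fun p : Fin n → X => (Fin.cons y p : Fin (n + 1) → X) :=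
  (measurable_cons_uncurry n).comp (measurable_const.prodMk measurable_id)

lemma measurable_consKernel {n : ℕ} (ihm : Measurable (pathLaw P n))
    (ihp : ∀ y, IsProbabilityMeasure (pathLaw P n y)) :
    Measurable fun y => (pathLaw P n y).map (fun p => (Fin.cons y p : Fin (n + 1) → X)) := by
  let K : ProbabilityTheory.Kernel X (Fin n → X) := ⟨pathLaw P n, ihm⟩
  haveI : ProbabilityTheory.IsMarkovKernel K := ⟨fun x => ihp x⟩
  refine Measure.measurable_measure.mpr fun s hs => ?_
  have heq : (fun y => (pathLaw P n y).map (fun p => (Fin.cons y p : Fin (n + 1) → X)) s)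
      = fun y => K y (Prod.mk y ⁻¹'
        ((fun q : X × (Fin n → X) => (Fin.cons q.1 q.2 : Fin (n + 1) → X)) ⁻¹' s)) := by
    funext y
    rw [Measure.map_apply (measurable_cons_left y) hs]
    rfl
  rw [heq]
  exact ProbabilityTheory.Kernel.measurable_kernel_prodMk_left
    ((measurable_cons_uncurry n) hs)

lemma pathLaw_meas_prob (hPmeas : Measurable P) (hPprob : ∀ x, IsProbabilityMeasure (P x)) :
    ∀ n : ℕ, Measurable (pathLaw P n) ∧ ∀ x, IsProbabilityMeasure (pathLaw P n x) := by
  intro n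
  induction n with
  | zero =>
      constructor
      · simp only [pathLaw]; exact measurable_const
      · intro x; simp only [pathLaw]; infer_instance
  | succ n ih =>
      obtain ⟨ihm, ihp⟩ := ih
      have hκmeas := measurable_consKernel (P := P) ihm ihp
      constructor
      · simp only [pathLaw]
        exact (Measure.measurable_bind' hκmeas).comp hPmeas
      · intro x
        simp only [pathLaw]
        refine isProbabilityMeasure_bind' _ _ (hPprob x) hκmeas fun y => ?_
        haveI := ihp y
        exact Measure.isProbabilityMeasure_map (measurable_cons_left y).aemeasurable

lemma pathLaw_marginal (hPmeas : Measurable P) (hPprob : ∀ x, IsProbabilityMeasure (P x)) :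
    ∀ (n : ℕ) (x : X) (i : Fin n),
      (pathLaw P n x).map (fun p => p i) = stepN P ((i : ℕ) + 1) x := by
  intro n
  induction n with
  | zero => intro x i; exact i.elim0
  | succ n ih =>
      intro x i
      obtain ⟨hm, hp⟩ := pathLaw_meas_prob hPmeas hPprob n
      have hκmeas := measurable_consKernel (P := P) hm hp
      simp only [pathLaw]
      rw [Measure.map_bind' (P x) _ _ hκmeas (measurable_pi_apply i)]
      induction i using Fin.cases with
      | zero =>
          have hco : ∀ y, ((pathLaw P n y).map (fun p => (Fin.cons y p : Fin (n + 1) → X))).map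
              (fun p : Fin (n + 1) → X => p 0) = Measure.dirac y := by
            intro y
            haveI := hp y
            rw [Measure.map_map (measurable_pi_apply 0) (measurable_cons_left y)]
            have hcc : ((fun p : Fin (n + 1) → X => p 0) ∘ (fun p : Fin n → X => (Fin.cons y p : Fin (n + 1) → X))) = fun _ => y :=
              funext fun p => Fin.cons_zero _ _
            rw [hcc, Measure.map_const, measure_univ, one_smul]
          simp only [hco]
          rw [Measure.bind_dirac]
          simp only [Fin.val_zero, stepN]
          exact (Measure.dirac_bind hPmeas x).symm
      | succ j =>
          have hco : ∀ y, ((pathLaw P n y).map (fun p => (Fin.cons y p : Fin (n + 1) → X))).map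
              (fun p : Fin (n + 1) → X => p j.succ) = stepN P ((j : ℕ) + 1) y := by
            intro y
            rw [Measure.map_map (measurable_pi_apply j.succ) (measurable_cons_left y)]
            have hcc : ((fun p : Fin (n + 1) → X => p j.succ) ∘ (fun p : Fin n → X => (Fin.cons y p : Fin (n + 1) → X)))
                = fun p => p j := funext fun p => Fin.cons_succ _ _ _
            rw [hcc]
            exact ih y j
          simp only [hco]
          rw [show ((j.succ : Fin (n + 1)) : ℕ) + 1 = ((j : ℕ) + 1) + 1 by
            simp [Fin.val_succ]]
          exact (stepN_succ' hPmeas ((j : ℕ) + 1) x).symm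

end PathLawHelpers
/-- **Bias of empirical means** (Proposition 1 of Joulin–Ollivier):
under positive Ricci curvature `κ ∈ (0,1]`, for every Lipschitz `f`, starting point `x`,
integers `T₀ ≥ 0` and `T ≥ 1`,
`|E_x π̂(f) − π(f)| ≤ ((1−κ)^{T₀+1} / (κ T)) E(x) ‖f‖_Lip`. -/
theorem bias_of_empirical_means
    [CompleteSpace X] [SecondCountableTopology X] [BorelSpace X]
    (P : X → Measure X) (hPmeas : Measurable P)
    (hPprob : ∀ x, IsProbabilityMeasure (P x))
    (hPmom : ∀ x y : X, (∫⁻ z, edist y z ∂(P x)) ≠ ⊤)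
    (κ : ℝ) (hκ0 : 0 < κ) (hκ1 : κ ≤ 1) (hcurv : PosCurvature P κ)
    (π : Measure X) (hπprob : IsProbabilityMeasure π) (hπinv : π.bind P = π)
    (hπmom : ∀ y : X, (∫⁻ z, edist y z ∂π) ≠ ⊤)
    (f : X → ℝ) (hf : ∃ K : ℝ≥0, LipschitzWith K f)
    (x : X) (T₀ T : ℕ) (hT : 1 ≤ T) :
    |empExp P f T₀ T x - ∫ y, f y ∂π|
      ≤ ((1 - κ) ^ (T₀ + 1) / (κ * T)) * ecc π x * lipNorm f := by
  set L := lipNorm f with hLdef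
  have hL0 : 0 ≤ L := lipNorm_nonneg' f hf
  have hflip : ∀ a b : X, |f a - f b| ≤ L * dist a b := abs_sub_le_lipNorm f hf
  have hr0 : (0:ℝ) ≤ 1 - κ := by linarith
  have hTpos : (0:ℝ) < T := by exact_mod_cast hT
  obtain ⟨hPLm, hPLp⟩ := pathLaw_meas_prob hPmeas hPprob (T₀ + T)
  haveI := hPLp x
  haveI := hπprob
  have hfc : Continuous f := (lipschitzWith_of_bound hL0 hflip).continuous
  have hIntTerm : ∀ i : Fin (T₀ + T),
      Integrable (fun p : Fin (T₀ + T) → X => f (p i)) (pathLaw P (T₀ + T) x) := by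
    intro i
    have hmap := pathLaw_marginal hPmeas hPprob (T₀ + T) x i
    have hInt : Integrable f ((pathLaw P (T₀ + T) x).map (fun p => p i)) := by
      rw [hmap]
      exact integrable_stepN hPmeas hPprob hPmom hκ0 hκ1 hcurv hL0 hflip _ x
    exact (integrable_map_measure hfc.measurable.aestronglyMeasurable
      (measurable_pi_apply i).aemeasurable).mp hInt
  have hIntTerm' : ∀ i : Fin (T₀ + T),
      Integrable (fun p : Fin (T₀ + T) → X => if T₀ ≤ (i : ℕ) then f (p i) else 0)
        (pathLaw P (T₀ + T) x) := by
    intro i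
    by_cases hi : T₀ ≤ (i : ℕ)
    · simpa [hi] using hIntTerm i
    · simp [hi]
  have hTermVal : ∀ i : Fin (T₀ + T),
      (∫ p, f (p i) ∂pathLaw P (T₀ + T) x) = avgN P ((i : ℕ) + 1) f x := by
    intro i
    rw [← integral_map (measurable_pi_apply i).aemeasurable
      hfc.measurable.aestronglyMeasurable,
      pathLaw_marginal hPmeas hPprob (T₀ + T) x i]
    rfl
  have hemp : empExp P f T₀ T x
      = (1 / (T : ℝ)) * ∑ i : Fin (T₀ + T),
          (if T₀ ≤ (i : ℕ) then avgN P ((i : ℕ) + 1) f x else 0) := by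
    simp only [empExp, empMean]
    rw [integral_const_mul]
    congr 1
    rw [integral_finset_sum Finset.univ (fun i _ => hIntTerm' i)]
    refine Finset.sum_congr rfl fun i _ => ?_
    by_cases hi : T₀ ≤ (i : ℕ)
    · simp only [hi, if_true]
      exact hTermVal i
    · simp [hi]
  have hbias : ∀ k : ℕ, |avgN P k f x - ∫ y, f y ∂π| ≤ ((1 - κ) ^ k * L) * ecc π x :=
    fun k => avgN_bias hPmeas hPprob hPmom hκ0 hκ1 hcurv π hπprob hπinv hπmom hL0 hflip x k
  set Iπ := ∫ y, f y ∂π with hIπdef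
  have hsum1 : (∑ i : Fin (T₀ + T), (if T₀ ≤ (i : ℕ) then avgN P ((i : ℕ) + 1) f x else 0))
      = ∑ j ∈ Finset.range T, avgN P (T₀ + j + 1) f x := by
    rw [Fin.sum_univ_eq_sum_range (fun i => if T₀ ≤ i then avgN P (i + 1) f x else 0) (T₀ + T)]
    rw [Finset.range_eq_Ico, ← Finset.sum_Ico_consecutive _ (Nat.zero_le T₀) (Nat.le_add_right T₀ T)]
    have h0 : (∑ i ∈ Finset.Ico 0 T₀, (if T₀ ≤ i then avgN P (i + 1) f x else 0)) = 0 :=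
      Finset.sum_eq_zero fun i hi => by
        have h2 := (Finset.mem_Ico.1 hi).2
        simp [Nat.not_le.2 h2]
    rw [h0, zero_add, Finset.sum_Ico_eq_sum_range]
    refine Finset.sum_congr (by rw [Nat.add_sub_cancel_left, Finset.range_eq_Ico]) fun j hj => ?_
    simp [Nat.le_add_right]
  have hecc0 : 0 ≤ ecc π x := integral_nonneg fun y => dist_nonneg
  have hgeom : (∑ j ∈ Finset.range T, (1 - κ) ^ j) ≤ 1 / κ := by
    have hne : (1 - κ : ℝ) ≠ 1 := by linarith
    rw [geom_sum_eq hne T]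
    have h1 : ((1 - κ : ℝ) ^ T - 1) / (1 - κ - 1) = (1 - (1 - κ) ^ T) / κ := by
      rw [show (1 - κ - 1 : ℝ) = -κ by ring, div_neg, ← neg_div, neg_sub]
    rw [h1]
    refine (div_le_div_iff_of_pos_right hκ0).2 ?_
    nlinarith [pow_nonneg hr0 T]
  rw [hemp, hsum1]
  have key : |(1 / (T : ℝ)) * ∑ j ∈ Finset.range T, avgN P (T₀ + j + 1) f x - Iπ|
      ≤ (1 / (T : ℝ)) * ∑ j ∈ Finset.range T, ((1 - κ) ^ (T₀ + j + 1) * L) * ecc π x := by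
    have hIπ' : Iπ = (1 / (T : ℝ)) * ∑ _j ∈ Finset.range T, Iπ := by
      rw [Finset.sum_const, Finset.card_range, nsmul_eq_mul]
      field_simp
    calc |(1 / (T : ℝ)) * ∑ j ∈ Finset.range T, avgN P (T₀ + j + 1) f x - Iπ|
        = |(1 / (T : ℝ)) * ∑ j ∈ Finset.range T, (avgN P (T₀ + j + 1) f x - Iπ)| := by
          rw [Finset.sum_sub_distrib, mul_sub, ← hIπ']
      _ ≤ (1 / (T : ℝ)) * ∑ j ∈ Finset.range T, |avgN P (T₀ + j + 1) f x - Iπ| := by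
          rw [abs_mul, abs_of_nonneg (by positivity : (0:ℝ) ≤ 1 / (T : ℝ))]
          exact mul_le_mul_of_nonneg_left (Finset.abs_sum_le_sum_abs _ _) (by positivity)
      _ ≤ (1 / (T : ℝ)) * ∑ j ∈ Finset.range T, ((1 - κ) ^ (T₀ + j + 1) * L) * ecc π x :=
          mul_le_mul_of_nonneg_left (Finset.sum_le_sum fun j _ => hbias (T₀ + j + 1))
            (by positivity)
  refine key.trans ?_
  have hsum2 : (∑ j ∈ Finset.range T, ((1 - κ) ^ (T₀ + j + 1) * L) * ecc π x)
      = (1 - κ) ^ (T₀ + 1) * (∑ j ∈ Finset.range T, (1 - κ) ^ j) * (L * ecc π x) := by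
    rw [Finset.mul_sum, Finset.sum_mul]
    refine Finset.sum_congr rfl fun j _ => ?_
    rw [show T₀ + j + 1 = (T₀ + 1) + j by ring, pow_add]
    ring
  rw [hsum2]
  have hstep : (1 / (T : ℝ)) * ((1 - κ) ^ (T₀ + 1) * (∑ j ∈ Finset.range T, (1 - κ) ^ j)
        * (L * ecc π x))
      ≤ (1 / (T : ℝ)) * ((1 - κ) ^ (T₀ + 1) * (1 / κ) * (L * ecc π x)) := by
    refine mul_le_mul_of_nonneg_left ?_ (by positivity)
    refine mul_le_mul_of_nonneg_right ?_ (mul_nonneg hL0 hecc0)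
    exact mul_le_mul_of_nonneg_left hgeom (pow_nonneg hr0 _)
  refine hstep.trans (le_of_eq ?_)
  field_simp

end
end

section
/- Variance due to a randomized starting point: under the positive Ricci curvature assumption with constant κ ∈ (0,1], let μ be a probability measure on 𝒳 with ∬ d(x,y)² μ(dx) μ(dy) < ∞, let f : 𝒳 → ℝ be 1-Lipschitz, and for integers T₀ ≥ 0, T ≥ 1 define g(x) := E_x π̂(f) = (1/T) ∑_{k=T₀+1}^{T₀+T} P^k f(x). Then the variance of g under μ satisfies Var_{X₀∼μ}[ g(X₀) ] ≤ ((1−κ)^{2(T₀+1)} / (2κ²T²)) ∬ d(x,y)² μ(dx) μ(dy). -/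
open MeasureTheory ENNReal
open scoped NNReal

noncomputable section

variable {X : Type*} [MetricSpace X] [MeasurableSpace X]

section JOHelpers

set_option linter.unusedSectionVars false

variable {X : Type*} [MetricSpace X] [MeasurableSpace X] [SecondCountableTopology X]

lemma jo_integrable_dist [OpensMeasurableSpace X] (ν : Measure X) (y : X)
    (hm : (∫⁻ z, edist y z ∂ν) ≠ ⊤) : Integrable (fun z => dist y z) ν := by
  refine ⟨(continuous_const.dist continuous_id).aestronglyMeasurable, ?_⟩
  rw [hasFiniteIntegral_iff_ofReal (Filter.Eventually.of_forall fun z => dist_nonneg)]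
  simpa only [← edist_dist] using hm.lt_top

lemma jo_integrable_of_lip [OpensMeasurableSpace X] {f : X → ℝ} {L : ℝ≥0}
    (hf : LipschitzWith L f) (ν : Measure X) [IsFiniteMeasure ν] (y : X)
    (hm : (∫⁻ z, edist y z ∂ν) ≠ ⊤) : Integrable f ν := by
  have hd := jo_integrable_dist ν y hm
  refine Integrable.mono' ((integrable_const |f y|).add (hd.const_mul (L : ℝ)))
    hf.continuous.aestronglyMeasurable (Filter.Eventually.of_forall fun z => ?_)
  simp only [Pi.add_apply]
  have h1 : |f z - f y| ≤ (L : ℝ) * dist z y := by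
    simpa [Real.dist_eq] using hf.dist_le_mul z y
  rw [Real.norm_eq_abs]
  have h2 : |f z| ≤ |f y| + |f z - f y| := by
    have := abs_sub_abs_le_abs_sub (f z) (f y); linarith
  rw [dist_comm z y] at h1
  linarith

lemma jo_one_step_lip [OpensMeasurableSpace X] (P : X → Measure X)
    (hPprob : ∀ x, IsProbabilityMeasure (P x))
    (hPmom : ∀ x y : X, (∫⁻ z, edist y z ∂(P x)) ≠ ⊤)
    (κ : ℝ) (hκ1 : κ ≤ 1) (hcurv : PosCurvature P κ)
    {f : X → ℝ} {L : ℝ≥0} (hf : LipschitzWith L f) (x y : X) :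
    dist (∫ z, f z ∂(P x)) (∫ z, f z ∂(P y)) ≤ (L : ℝ) * ((1 - κ) * dist x y) := by
  haveI := hPprob x; haveI := hPprob y
  set D : ℝ := (1 - κ) * dist x y with hD
  have hD0 : 0 ≤ D := mul_nonneg (by linarith) dist_nonneg
  refine le_of_forall_pos_le_add fun ε hε => ?_
  set δ : ℝ := ε / ((L : ℝ) + 1) with hδ
  have hδ0 : 0 < δ := div_pos hε (by positivity)
  have hW : W1 (P x) (P y) < ENNReal.ofReal (D + δ) := by
    refine lt_of_le_of_lt (hcurv x y) ?_
    exact (ENNReal.ofReal_lt_ofReal_iff (by linarith)).mpr (by linarith)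
  rw [W1] at hW
  simp only [iInf_lt_iff] at hW
  obtain ⟨ξ, h1, h2, hcost⟩ := hW
  have hξuniv : ξ Set.univ = 1 := by
    have h := congrArg (fun m : Measure X => m Set.univ) h1
    simp only [Measure.map_apply measurable_fst MeasurableSet.univ, Set.preimage_univ] at h
    rw [h]; exact measure_univ
  haveI hξprob : IsProbabilityMeasure ξ := ⟨hξuniv⟩
  have hdint : Integrable (fun p : X × X => dist p.1 p.2) ξ := by
    refine ⟨(continuous_fst.dist continuous_snd).aestronglyMeasurable, ?_⟩
    rw [hasFiniteIntegral_iff_ofReal (Filter.Eventually.of_forall fun p => dist_nonneg)]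
    simp only [← edist_dist]
    exact hcost.trans_le le_top
  have hdle : ∫ p, dist p.1 p.2 ∂ξ ≤ D + δ := by
    rw [integral_eq_lintegral_of_nonneg_ae (Filter.Eventually.of_forall fun p => dist_nonneg)
      (continuous_fst.dist continuous_snd).aestronglyMeasurable]
    simp only [← edist_dist]
    calc (∫⁻ p, edist p.1 p.2 ∂ξ).toReal ≤ (ENNReal.ofReal (D + δ)).toReal :=
        ENNReal.toReal_mono ENNReal.ofReal_ne_top hcost.le
      _ = D + δ := ENNReal.toReal_ofReal (by linarith)
  have hf1 : Integrable (fun p : X × X => f p.1) ξ := by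
    have hi : Integrable f (P x) := jo_integrable_of_lip hf (P x) x (hPmom x x)
    rw [← h1] at hi
    simpa [Function.comp_def] using
      (integrable_map_measure hf.continuous.aestronglyMeasurable measurable_fst.aemeasurable).mp hi
  have hf2 : Integrable (fun p : X × X => f p.2) ξ := by
    have hi : Integrable f (P y) := jo_integrable_of_lip hf (P y) y (hPmom y y)
    rw [← h2] at hi
    simpa [Function.comp_def] using
      (integrable_map_measure hf.continuous.aestronglyMeasurable measurable_snd.aemeasurable).mp hi
  have hEx : ∫ z, f z ∂(P x) = ∫ p, f p.1 ∂ξ := by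
    rw [← h1, integral_map measurable_fst.aemeasurable hf.continuous.aestronglyMeasurable]
  have hEy : ∫ z, f z ∂(P y) = ∫ p, f p.2 ∂ξ := by
    rw [← h2, integral_map measurable_snd.aemeasurable hf.continuous.aestronglyMeasurable]
  have hLδ : (L : ℝ) * δ ≤ ε := by
    have hδε : δ * ((L : ℝ) + 1) = ε := div_mul_cancel₀ _ (by positivity)
    nlinarith [L.coe_nonneg, hδ0.le]
  rw [Real.dist_eq, hEx, hEy, ← integral_sub hf1 hf2]
  calc |∫ p, (f p.1 - f p.2) ∂ξ| ≤ ∫ p, |f p.1 - f p.2| ∂ξ := by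
        simpa [Real.norm_eq_abs] using
          norm_integral_le_integral_norm (μ := ξ) (fun p : X × X => f p.1 - f p.2)
    _ ≤ ∫ p, (L : ℝ) * dist p.1 p.2 ∂ξ := by
        refine integral_mono (hf1.sub hf2).abs (hdint.const_mul _) fun p => ?_
        simpa [Real.dist_eq] using hf.dist_le_mul p.1 p.2
    _ = (L : ℝ) * ∫ p, dist p.1 p.2 ∂ξ := integral_const_mul _ _
    _ ≤ (L : ℝ) * (D + δ) := mul_le_mul_of_nonneg_left hdle L.coe_nonneg
    _ ≤ (L : ℝ) * D + ε := by nlinarith [L.coe_nonneg]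

lemma jo_stepN_meas (P : X → Measure X) (hPmeas : Measurable P) (n : ℕ) :
    Measurable (stepN P n) := by
  induction n with
  | zero => exact Measure.measurable_dirac
  | succ n ih => exact (Measure.measurable_bind' hPmeas).comp ih

lemma jo_stepN_prob (P : X → Measure X) (hPmeas : Measurable P)
    (hPprob : ∀ x, IsProbabilityMeasure (P x)) (n : ℕ) (x : X) :
    IsProbabilityMeasure (stepN P n x) := by
  induction n generalizing x with
  | zero => exact Measure.dirac.isProbabilityMeasure
  | succ n ih =>
    constructor
    rw [show stepN P (n + 1) x = (stepN P n x).bind P from rfl,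
      Measure.bind_apply MeasurableSet.univ hPmeas.aemeasurable,
      lintegral_congr fun z => (hPprob z).measure_univ, lintegral_one, (ih x).measure_univ]

lemma jo_stepN_mom [OpensMeasurableSpace X] (P : X → Measure X) (hPmeas : Measurable P)
    (hPprob : ∀ x, IsProbabilityMeasure (P x))
    (hPmom : ∀ x y : X, (∫⁻ z, edist y z ∂(P x)) ≠ ⊤)
    (κ : ℝ) (hκ0 : 0 < κ) (hκ1 : κ ≤ 1) (hcurv : PosCurvature P κ) (n : ℕ) (x y : X) :
    (∫⁻ z, edist y z ∂(stepN P n x)) ≠ ⊤ := by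
  induction n generalizing x y with
  | zero =>
    rw [show stepN P 0 x = Measure.dirac x from rfl,
      lintegral_dirac' x (measurable_const.edist measurable_id')]
    exact edist_ne_top y x
  | succ n ih =>
    haveI := jo_stepN_prob P hPmeas hPprob n x
    set F : X → ℝ := fun w => ∫ z, dist y z ∂(P w) with hF
    have hdistlip : LipschitzWith 1 (fun z : X => dist y z) := LipschitzWith.dist_right y
    have hFle : ∀ w, (∫⁻ z, edist y z ∂(P w)) ≤ ENNReal.ofReal (F x) + edist x w := by
      intro w
      haveI := hPprob w
      have hint : Integrable (fun z => dist y z) (P w) := jo_integrable_dist (P w) y (hPmom w y)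
      have h1 : (∫⁻ z, edist y z ∂(P w)) = ENNReal.ofReal (F w) := by
        simp only [edist_dist]
        exact (ofReal_integral_eq_lintegral_ofReal hint
          (Filter.Eventually.of_forall fun z => dist_nonneg)).symm
      have h2 : F w ≤ F x + dist x w := by
        have hd := jo_one_step_lip P hPprob hPmom κ hκ1 hcurv hdistlip w x
        have habs : |F w - F x| ≤ (1 - κ) * dist w x := by
          simpa [Real.dist_eq] using hd
        have : (1 - κ) * dist w x ≤ dist w x := by
          nlinarith [dist_nonneg (x := w) (y := x), hκ0]
        rw [dist_comm x w]
        have := abs_le.mp habs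
        linarith [this.2]
      calc (∫⁻ z, edist y z ∂(P w)) = ENNReal.ofReal (F w) := h1
        _ ≤ ENNReal.ofReal (F x + dist x w) := ENNReal.ofReal_le_ofReal h2
        _ ≤ ENNReal.ofReal (F x) + ENNReal.ofReal (dist x w) := ENNReal.ofReal_add_le
        _ = ENNReal.ofReal (F x) + edist x w := by rw [edist_dist]
    rw [show stepN P (n + 1) x = (stepN P n x).bind P from rfl,
      Measure.lintegral_bind hPmeas.aemeasurable (measurable_const.edist measurable_id').aemeasurable]
    refine ne_top_of_le_ne_top ?_ (lintegral_mono hFle)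
    rw [lintegral_add_left measurable_const, lintegral_const, measure_univ, mul_one]
    exact ENNReal.add_ne_top.mpr ⟨ENNReal.ofReal_ne_top, ih x x⟩

lemma jo_integral_bind [OpensMeasurableSpace X] (P : X → Measure X) (hPmeas : Measurable P)
    (hPprob : ∀ x, IsProbabilityMeasure (P x)) (ν : Measure X) [IsProbabilityMeasure ν]
    {f : X → ℝ} (hfc : Continuous f) (hfi : Integrable f (ν.bind P)) :
    ∫ z, f z ∂(ν.bind P) = ∫ w, ∫ z, f z ∂(P w) ∂ν := by
  letI K : ProbabilityTheory.Kernel X X := ⟨P, hPmeas⟩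
  haveI : ProbabilityTheory.IsMarkovKernel K := ⟨hPprob⟩
  have hbind : ν.bind P = (ν.compProd K).map Prod.snd := by
    ext s hs
    rw [Measure.bind_apply hs hPmeas.aemeasurable, Measure.map_apply measurable_snd hs,
      Measure.compProd_apply (measurable_snd hs)]
    rfl
  have hfi' : Integrable (fun p : X × X => f p.2) (ν.compProd K) := by
    rw [hbind] at hfi
    simpa [Function.comp_def] using
      (integrable_map_measure hfc.aestronglyMeasurable measurable_snd.aemeasurable).mp hfi
  rw [hbind, integral_map measurable_snd.aemeasurable hfc.aestronglyMeasurable,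
    Measure.integral_compProd hfi']
  rfl

lemma jo_avgN_lip [OpensMeasurableSpace X] (P : X → Measure X) (hPmeas : Measurable P)
    (hPprob : ∀ x, IsProbabilityMeasure (P x))
    (hPmom : ∀ x y : X, (∫⁻ z, edist y z ∂(P x)) ≠ ⊤)
    (κ : ℝ) (hκ0 : 0 < κ) (hκ1 : κ ≤ 1) (hcurv : PosCurvature P κ) (n : ℕ) :
    ∀ {L : ℝ≥0} (f : X → ℝ), LipschitzWith L f →
      ∀ x y : X, dist (avgN P n f x) (avgN P n f y) ≤ (L : ℝ) * (1 - κ) ^ n * dist x y := by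
  induction n with
  | zero =>
    intro L f hf x y
    have h0 : ∀ z, avgN P 0 f z = f z := fun z => by
      rw [show avgN P 0 f z = ∫ w, f w ∂(Measure.dirac z) from rfl,
        integral_dirac' f z hf.continuous.stronglyMeasurable]
    rw [h0 x, h0 y]
    simpa using hf.dist_le_mul x y
  | succ n ih =>
    intro L f hf x y
    have hκ0' : (0 : ℝ) ≤ 1 - κ := by linarith
    set Qf : X → ℝ := fun w => ∫ z, f z ∂(P w) with hQf
    have hQlip : LipschitzWith (L * (1 - κ).toNNReal) Qf := by
      refine LipschitzWith.of_dist_le_mul fun w z => ?_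
      have hc : ((L * (1 - κ).toNNReal : ℝ≥0) : ℝ) = (L : ℝ) * (1 - κ) := by
        rw [NNReal.coe_mul, Real.coe_toNNReal _ hκ0']
      rw [hc, mul_assoc]
      exact jo_one_step_lip P hPprob hPmom κ hκ1 hcurv hf w z
    have havg : ∀ z, avgN P (n + 1) f z = avgN P n Qf z := by
      intro z
      haveI := jo_stepN_prob P hPmeas hPprob n z
      haveI := jo_stepN_prob P hPmeas hPprob (n + 1) z
      have hint : Integrable f ((stepN P n z).bind P) :=
        jo_integrable_of_lip hf (stepN P (n + 1) z) z
          (jo_stepN_mom P hPmeas hPprob hPmom κ hκ0 hκ1 hcurv (n + 1) z z)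
      rw [show avgN P (n + 1) f z = ∫ w, f w ∂((stepN P n z).bind P) from rfl,
        jo_integral_bind P hPmeas hPprob _ hf.continuous hint]
      rfl
    rw [havg x, havg y]
    have h := ih Qf hQlip x y
    have hc : ((L * (1 - κ).toNNReal : ℝ≥0) : ℝ) = (L : ℝ) * (1 - κ) := by
      rw [NNReal.coe_mul, Real.coe_toNNReal _ hκ0']
    rw [hc] at h
    calc dist (avgN P n Qf x) (avgN P n Qf y) ≤ (L : ℝ) * (1 - κ) * (1 - κ) ^ n * dist x y := h
      _ = (L : ℝ) * (1 - κ) ^ (n + 1) * dist x y := by ring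

lemma jo_variance_bound [OpensMeasurableSpace X] (μ : Measure X) [IsProbabilityMeasure μ]
    (hμ2 : Integrable (fun q : X × X => dist q.1 q.2 ^ 2) (μ.prod μ))
    (g : X → ℝ) (C : ℝ) (hC0 : 0 ≤ C)
    (hglip : ∀ x y : X, |g x - g y| ≤ C * dist x y) :
    ∫ z, (g z - ∫ w, g w ∂μ) ^ 2 ∂μ ≤ (C ^ 2 / 2) * ∫ q, dist q.1 q.2 ^ 2 ∂(μ.prod μ) := by
  have hgL : LipschitzWith C.toNNReal g := by
    refine LipschitzWith.of_dist_le_mul fun x y => ?_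
    rw [Real.dist_eq, Real.coe_toNNReal _ hC0]
    exact hglip x y
  have hgcont : Continuous g := hgL.continuous
  haveI : (Filter.NeBot (ae μ)) := IsProbabilityMeasure.ae_neBot (μ := μ)
  obtain ⟨y₀, hy₀⟩ := (hμ2.prod_left_ae).exists
  have hdint2 : Integrable (fun x => dist x y₀ ^ 2) μ := hy₀
  have hdint1 : Integrable (fun x => dist x y₀) μ := by
    refine Integrable.mono' ((integrable_const 1).add hdint2)
      ((continuous_id.dist continuous_const).aestronglyMeasurable)
      (Filter.Eventually.of_forall fun x => ?_)
    simp only [Pi.add_apply]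
    rw [Real.norm_eq_abs, abs_of_nonneg dist_nonneg]
    nlinarith [dist_nonneg (x := x) (y := y₀)]
  have hsq : ∀ x y : X, (g x - g y) ^ 2 ≤ C ^ 2 * dist x y ^ 2 := by
    intro x y
    nlinarith [hglip x y, abs_nonneg (g x - g y), sq_abs (g x - g y),
      dist_nonneg (x := x) (y := y)]
  have hgint : Integrable g μ := by
    refine Integrable.mono' ((integrable_const |g y₀|).add (hdint1.const_mul C))
      hgcont.aestronglyMeasurable (Filter.Eventually.of_forall fun x => ?_)
    simp only [Pi.add_apply]
    rw [Real.norm_eq_abs]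
    have h1 := hglip x y₀
    have h2 := abs_sub_abs_le_abs_sub (g x) (g y₀)
    linarith
  have hg2int : Integrable (fun x => g x ^ 2) μ := by
    refine Integrable.mono' ((integrable_const (2 * g y₀ ^ 2)).add (hdint2.const_mul (2 * C ^ 2)))
      (hgcont.pow 2).aestronglyMeasurable (Filter.Eventually.of_forall fun x => ?_)
    simp only [Pi.add_apply]
    rw [Real.norm_eq_abs, abs_of_nonneg (sq_nonneg _)]
    nlinarith [hsq x y₀, sq_nonneg (g x - 2 * g y₀)]
  set m : ℝ := ∫ w, g w ∂μ with hm
  -- integrability on the product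
  have hmap1 : (μ.prod μ).map Prod.fst = μ := by
    rw [Measure.map_fst_prod, measure_univ, one_smul]
  have hmap2 : (μ.prod μ).map Prod.snd = μ := by
    rw [Measure.map_snd_prod, measure_univ, one_smul]
  have h1 : Integrable (fun q : X × X => g q.1 ^ 2) (μ.prod μ) := by
    rw [← hmap1] at hg2int
    simpa [Function.comp_def] using
      (integrable_map_measure (hgcont.pow 2).aestronglyMeasurable
        measurable_fst.aemeasurable).mp hg2int
  have h2 : Integrable (fun q : X × X => g q.2 ^ 2) (μ.prod μ) := by
    have hg2int' := hg2int
    rw [← hmap2] at hg2int'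
    simpa [Function.comp_def] using
      (integrable_map_measure (hgcont.pow 2).aestronglyMeasurable
        measurable_snd.aemeasurable).mp hg2int'
  have h3 : Integrable (fun q : X × X => g q.1 * g q.2) (μ.prod μ) := hgint.mul_prod hgint
  have hB : Integrable (fun q : X × X => 2 * (g q.1 * g q.2)) (μ.prod μ) := h3.const_mul 2
  have hA : Integrable (fun q : X × X => g q.1 ^ 2 - 2 * (g q.1 * g q.2)) (μ.prod μ) :=
    h1.sub hB
  have hs0 : Integrable (fun q : X × X => g q.1 ^ 2 - 2 * (g q.1 * g q.2) + g q.2 ^ 2)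
      (μ.prod μ) := hA.add h2
  have hsqint : Integrable (fun q : X × X => (g q.1 - g q.2) ^ 2) (μ.prod μ) :=
    hs0.congr (Filter.Eventually.of_forall fun q => by ring)
  have e1 : ∫ q : X × X, g q.1 ^ 2 ∂(μ.prod μ) = ∫ x, g x ^ 2 ∂μ := by
    have := integral_prod_mul (μ := μ) (ν := μ) (fun x => g x ^ 2) (fun _ => (1 : ℝ))
    simpa using this
  have e2 : ∫ q : X × X, g q.2 ^ 2 ∂(μ.prod μ) = ∫ x, g x ^ 2 ∂μ := by
    have := integral_prod_mul (μ := μ) (ν := μ) (fun _ => (1 : ℝ)) (fun x => g x ^ 2)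
    simpa using this
  have e3 : ∫ q : X × X, g q.1 * g q.2 ∂(μ.prod μ) = m * m := by
    simpa [hm] using integral_prod_mul (μ := μ) (ν := μ) g g
  have hrhs : ∫ q : X × X, (g q.1 - g q.2) ^ 2 ∂(μ.prod μ)
      = 2 * (∫ x, g x ^ 2 ∂μ) - 2 * (m * m) := by
    have hcongr : ∫ q : X × X, (g q.1 - g q.2) ^ 2 ∂(μ.prod μ)
        = ∫ q : X × X, (g q.1 ^ 2 - 2 * (g q.1 * g q.2) + g q.2 ^ 2) ∂(μ.prod μ) :=
      integral_congr_ae (Filter.Eventually.of_forall fun q => by ring)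
    rw [hcongr, integral_add hA h2, integral_sub h1 hB, integral_const_mul, e1, e2, e3]
    ring
  have hB' : Integrable (fun z => 2 * m * g z) μ := hgint.const_mul (2 * m)
  have hA' : Integrable (fun z => g z ^ 2 - 2 * m * g z) μ := hg2int.sub hB'
  have hlhs : ∫ z, (g z - m) ^ 2 ∂μ = (∫ x, g x ^ 2 ∂μ) - m * m := by
    have hcongr : ∫ z, (g z - m) ^ 2 ∂μ
        = ∫ z, (g z ^ 2 - 2 * m * g z + m ^ 2) ∂μ :=
      integral_congr_ae (Filter.Eventually.of_forall fun z => by ring)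
    rw [hcongr, integral_add hA' (integrable_const _), integral_sub hg2int hB',
      integral_const_mul, integral_const, probReal_univ]
    simp only [ENNReal.toReal_one, one_smul, ← hm]
    ring
  have hmono : ∫ q : X × X, (g q.1 - g q.2) ^ 2 ∂(μ.prod μ)
      ≤ C ^ 2 * ∫ q : X × X, dist q.1 q.2 ^ 2 ∂(μ.prod μ) := by
    rw [← integral_const_mul]
    exact integral_mono hsqint (hμ2.const_mul _) fun q => hsq q.1 q.2
  rw [hlhs]
  linarith [hrhs, hmono]

end JOHelpers


/-- **Variance due to a randomized starting point** (Section 1.2 of Joulin–Ollivier):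
under positive Ricci curvature `κ ∈ (0,1]`, for `μ` with finite second moment of the
distance, `f` 1-Lipschitz and `g(x) = E_x π̂(f) = (1/T) ∑_{k=T₀+1}^{T₀+T} P^k f(x)`,
`Var_{X₀∼μ} g(X₀) ≤ ((1−κ)^{2(T₀+1)}/(2κ²T²)) ∬ d(x,y)² μ(dx)μ(dy)`. -/
theorem variance_of_randomized_starting_point
    [CompleteSpace X] [SecondCountableTopology X] [BorelSpace X]
    (P : X → Measure X) (hPmeas : Measurable P)
    (hPprob : ∀ x, IsProbabilityMeasure (P x))
    (hPmom : ∀ x y : X, (∫⁻ z, edist y z ∂(P x)) ≠ ⊤)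
    (κ : ℝ) (hκ0 : 0 < κ) (hκ1 : κ ≤ 1) (hcurv : PosCurvature P κ)
    (μ : Measure X) (hμprob : IsProbabilityMeasure μ)
    (hμ2 : Integrable (fun q : X × X => dist q.1 q.2 ^ 2) (μ.prod μ))
    (f : X → ℝ) (hf : LipschitzWith 1 f)
    (T₀ T : ℕ) (hT : 1 ≤ T) :
    (∫ z, ((1 / (T : ℝ)) * ∑ k ∈ Finset.range T, avgN P (T₀ + 1 + k) f z
        - ∫ w, (1 / (T : ℝ)) * ∑ k ∈ Finset.range T, avgN P (T₀ + 1 + k) f w ∂μ) ^ 2 ∂μ)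
      ≤ ((1 - κ) ^ (2 * (T₀ + 1)) / (2 * κ ^ 2 * (T : ℝ) ^ 2)) *
          ∫ q, dist q.1 q.2 ^ 2 ∂(μ.prod μ) := by
  haveI := hμprob
  set r : ℝ := 1 - κ with hrdef
  have hr0 : 0 ≤ r := by rw [hrdef]; linarith
  have hT0 : (0 : ℝ) < T := by exact_mod_cast hT
  set C : ℝ := r ^ (T₀ + 1) / (κ * T) with hC
  have hC0 : 0 ≤ C := div_nonneg (pow_nonneg hr0 _) (by positivity)
  have hglip : ∀ x y : X,
      |((1 / (T : ℝ)) * ∑ k ∈ Finset.range T, avgN P (T₀ + 1 + k) f x)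
        - ((1 / (T : ℝ)) * ∑ k ∈ Finset.range T, avgN P (T₀ + 1 + k) f y)|
      ≤ C * dist x y := by
    intro x y
    have hterm : ∀ k, |avgN P (T₀ + 1 + k) f x - avgN P (T₀ + 1 + k) f y|
        ≤ r ^ (T₀ + 1 + k) * dist x y := by
      intro k
      have h := jo_avgN_lip P hPmeas hPprob hPmom κ hκ0 hκ1 hcurv (T₀ + 1 + k) f hf x y
      simpa [Real.dist_eq, ← hrdef] using h
    have hgeom : ∑ k ∈ Finset.range T, r ^ (T₀ + 1 + k) ≤ r ^ (T₀ + 1) / κ := by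
      have hrne : r ≠ 1 := by rw [hrdef]; intro h; linarith
      have hrsum : ∑ k ∈ Finset.range T, r ^ k ≤ 1 / κ := by
        rw [geom_sum_eq hrne]
        have h1 : (r ^ T - 1) / (r - 1) = (1 - r ^ T) / κ := by
          rw [show r - 1 = -κ by rw [hrdef]; ring, div_neg, ← neg_div]
          ring_nf
        rw [h1]
        have h2 : 1 - r ^ T ≤ 1 := by nlinarith [pow_nonneg hr0 T]
        gcongr
      calc ∑ k ∈ Finset.range T, r ^ (T₀ + 1 + k)
          = r ^ (T₀ + 1) * ∑ k ∈ Finset.range T, r ^ k := by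
            rw [Finset.mul_sum]; exact Finset.sum_congr rfl fun k _ => by rw [pow_add]
        _ ≤ r ^ (T₀ + 1) * (1 / κ) := mul_le_mul_of_nonneg_left hrsum (pow_nonneg hr0 _)
        _ = r ^ (T₀ + 1) / κ := by ring
    have hsplit : (1 / (T : ℝ)) * ∑ k ∈ Finset.range T, avgN P (T₀ + 1 + k) f x
        - (1 / (T : ℝ)) * ∑ k ∈ Finset.range T, avgN P (T₀ + 1 + k) f y
        = (1 / (T : ℝ)) * ∑ k ∈ Finset.range T,
            (avgN P (T₀ + 1 + k) f x - avgN P (T₀ + 1 + k) f y) := by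
      rw [← mul_sub, Finset.sum_sub_distrib]
    rw [hsplit]
    have habs : |(1 / (T : ℝ)) * ∑ k ∈ Finset.range T,
        (avgN P (T₀ + 1 + k) f x - avgN P (T₀ + 1 + k) f y)|
        ≤ (1 / (T : ℝ)) * ((r ^ (T₀ + 1) / κ) * dist x y) := by
      rw [abs_mul, abs_of_nonneg (by positivity : (0 : ℝ) ≤ 1 / (T : ℝ))]
      refine mul_le_mul_of_nonneg_left ?_ (by positivity)
      calc |∑ k ∈ Finset.range T, (avgN P (T₀ + 1 + k) f x - avgN P (T₀ + 1 + k) f y)|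
          ≤ ∑ k ∈ Finset.range T, |avgN P (T₀ + 1 + k) f x - avgN P (T₀ + 1 + k) f y| :=
            Finset.abs_sum_le_sum_abs _ _
        _ ≤ ∑ k ∈ Finset.range T, r ^ (T₀ + 1 + k) * dist x y :=
            Finset.sum_le_sum fun k _ => hterm k
        _ = (∑ k ∈ Finset.range T, r ^ (T₀ + 1 + k)) * dist x y := (Finset.sum_mul _ _ _).symm
        _ ≤ (r ^ (T₀ + 1) / κ) * dist x y := mul_le_mul_of_nonneg_right hgeom dist_nonneg
    have heq : (1 / (T : ℝ)) * ((r ^ (T₀ + 1) / κ) * dist x y) = C * dist x y := by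
      rw [hC]; ring
    exact heq ▸ habs
  have hvb := jo_variance_bound μ hμ2
    (fun z => (1 / (T : ℝ)) * ∑ k ∈ Finset.range T, avgN P (T₀ + 1 + k) f z) C hC0 hglip
  refine le_trans hvb (le_of_eq ?_)
  have hcoef : C ^ 2 / 2 = r ^ (2 * (T₀ + 1)) / (2 * κ ^ 2 * (T : ℝ) ^ 2) := by
    rw [hC, div_pow, show r ^ (2 * (T₀ + 1)) = (r ^ (T₀ + 1)) ^ 2 by rw [mul_comm, pow_mul],
      mul_pow]
    ring
  rw [hcoef]


end
end

section
/- Local bound on the eccentricity: under the positive Ricci curvature assumption with constant κ ∈ (0,1], for every x ∈ 𝒳 the eccentricity satisfies E(x) ≤ (1/κ) ∫ d(x,y) P_x(dy). -/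
open MeasureTheory ENNReal
open scoped NNReal

noncomputable section

variable {X : Type*} [MetricSpace X] [MeasurableSpace X]

/-- **Local bound on the eccentricity**: under positive Ricci curvature `κ ∈ (0,1]`,
for every `x`, `E(x) ≤ (1/κ) ∫ d(x,y) P_x(dy)`. -/
theorem local_bound_on_eccentricity
    [CompleteSpace X] [SecondCountableTopology X] [BorelSpace X]
    (P : X → Measure X) (hPmeas : Measurable P)
    (hPprob : ∀ x, IsProbabilityMeasure (P x))
    (hPmom : ∀ x y : X, (∫⁻ z, edist y z ∂(P x)) ≠ ⊤)
    (κ : ℝ) (hκ0 : 0 < κ) (hκ1 : κ ≤ 1) (hcurv : PosCurvature P κ)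
    (π : Measure X) (hπprob : IsProbabilityMeasure π) (hπinv : π.bind P = π)
    (hπmom : ∀ y : X, (∫⁻ z, edist y z ∂π) ≠ ⊤)
    (x : X) :
    ecc π x ≤ (1 / κ) * ∫ y, dist x y ∂(P x) := by
  have hπprob' := hπprob
  have hme : Measurable fun z => edist x z :=
    (continuous_const.edist continuous_id).measurable
  set Lx : ℝ≥0∞ := ∫⁻ z, edist x z ∂(P x) with hLx
  have key : ∀ y, (∫⁻ z, edist x z ∂(P y)) ≤ Lx + ENNReal.ofReal (1 - κ) * edist x y := by
    intro y
    have h1 : (∫⁻ z, edist x z ∂(P y)) ≤ Lx + W1 (P x) (P y) := by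
      rw [← tsub_le_iff_left]
      refine le_iInf fun ξ => le_iInf fun hfst => le_iInf fun hsnd => ?_
      rw [tsub_le_iff_left]
      have e2 : (∫⁻ z, edist x z ∂(P y)) = ∫⁻ p, edist x p.2 ∂ξ := by
        rw [← hsnd, lintegral_map hme measurable_snd]
      have e1 : Lx = ∫⁻ p, edist x p.1 ∂ξ := by
        rw [hLx, ← hfst, lintegral_map hme measurable_fst]
      have hm1 : Measurable fun p : X × X => edist x p.1 := hme.comp measurable_fst
      rw [e1, e2]
      exact (lintegral_mono fun p : X × X => edist_triangle x p.1 p.2).trans_eq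
        (lintegral_add_left hm1 _)
    have h2 : W1 (P x) (P y) ≤ ENNReal.ofReal (1 - κ) * edist x y := by
      have := hcurv x y
      rwa [ENNReal.ofReal_mul (by linarith), ← edist_dist] at this
    exact h1.trans (add_le_add_right h2 _)
  have hbind : (∫⁻ y, edist x y ∂π) = ∫⁻ y, ∫⁻ z, edist x z ∂(P y) ∂π := by
    conv_lhs => rw [← hπinv]
    exact Measure.lintegral_bind hPmeas.aemeasurable hme.aemeasurable
  set A : ℝ≥0∞ := ∫⁻ y, edist x y ∂π with hAdef
  have main : A ≤ Lx + ENNReal.ofReal (1 - κ) * A := by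
    calc A = ∫⁻ y, ∫⁻ z, edist x z ∂(P y) ∂π := hbind
      _ ≤ ∫⁻ y, (Lx + ENNReal.ofReal (1 - κ) * edist x y) ∂π := lintegral_mono key
      _ = Lx + ENNReal.ofReal (1 - κ) * ∫⁻ y, edist x y ∂π := by
          rw [lintegral_add_left measurable_const, lintegral_const_mul _ hme,
            lintegral_const, measure_univ, mul_one]
      _ = Lx + ENNReal.ofReal (1 - κ) * A := rfl
  have hA : A ≠ ⊤ := hπmom x
  have hB : Lx ≠ ⊤ := hPmom x x
  have hrhs : Lx + ENNReal.ofReal (1 - κ) * A ≠ ⊤ :=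
    ENNReal.add_ne_top.2 ⟨hB, ENNReal.mul_ne_top ENNReal.ofReal_ne_top hA⟩
  have hreal : A.toReal ≤ Lx.toReal + (1 - κ) * A.toReal := by
    have h := ENNReal.toReal_mono hrhs main
    rwa [ENNReal.toReal_add hB (ENNReal.mul_ne_top ENNReal.ofReal_ne_top hA),
      ENNReal.toReal_mul, ENNReal.toReal_ofReal (by linarith)] at h
  have hfin : A.toReal ≤ (1 / κ) * Lx.toReal := by
    rw [div_mul_eq_mul_div, one_mul, le_div_iff₀ hκ0]
    nlinarith
  have hecc : ecc π x = A.toReal := by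
    rw [ecc, integral_eq_lintegral_of_nonneg_ae (ae_of_all _ fun y => dist_nonneg)
      ((continuous_const.dist continuous_id : Continuous fun y : X => dist x y)).aestronglyMeasurable]
    simp_rw [← edist_dist]
    rfl
  have hIx : ∫ y, dist x y ∂(P x) = Lx.toReal := by
    rw [integral_eq_lintegral_of_nonneg_ae (ae_of_all _ fun y => dist_nonneg)
      ((continuous_const.dist continuous_id : Continuous fun y : X => dist x y)).aestronglyMeasurable]
    simp_rw [← edist_dist]
    rfl
  rw [hecc, hIx]
  exact hfin

end
end

section
/- Curvature and diffusion constant of the binomial Markov chain: fix an integer d ≥ 1 and a real λ with 0 < λ < d, and consider the Markov chain on {0, 1, …, d} (with the usual distance |x−y|) with transition probabilities P_x(x+1) = (λ/d)(1 − x/d), P_x(x−1) = (1 − λ/d)(x/d), and P_x(x) = λx/d² + (1 − λ/d)(1 − x/d). Then this chain has positive Ricci curvature κ ≥ 1/d, i.e., W₁(P_x, P_y) ≤ (1 − 1/d)|x − y| for all x, y ∈ {0,…,d}, and its coarse diffusion constant satisfies σ(x)² ≤ (λ + x)/d for every x ∈ {0,…,d}. -/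
open MeasureTheory ENNReal
open scoped NNReal

noncomputable section

variable {X : Type*} [MetricSpace X] [MeasurableSpace X]

/-- Transition kernel of the binomial Markov chain on `{0, 1, …, d}` (viewed inside `ℕ`)
with parameters `d` and `λ/d`. -/
def binomialKernel (d : ℕ) (lam : ℝ) : ℕ → Measure ℕ := fun x =>
  ENNReal.ofReal ((lam / d) * (1 - (x : ℝ) / d)) • Measure.dirac (x + 1)
    + ENNReal.ofReal ((1 - lam / d) * ((x : ℝ) / d)) • Measure.dirac (x - 1)
    + ENNReal.ofReal (lam * (x : ℝ) / (d : ℝ) ^ 2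
        + (1 - lam / d) * (1 - (x : ℝ) / d)) • Measure.dirac x


set_option maxHeartbeats 1000000

section BinomialAux

lemma W1_le_coupling {α : Type*} [MetricSpace α] [MeasurableSpace α]
    {μ ν : Measure α} (ξ : Measure (α × α)) (h1 : ξ.map Prod.fst = μ)
    (h2 : ξ.map Prod.snd = ν) : W1 μ ν ≤ ∫⁻ p, edist p.1 p.2 ∂ξ := by
  unfold W1
  exact iInf_le_of_le ξ (iInf_le_of_le h1 (iInf_le _ h2))

lemma W1_symm_le {α : Type*} [MetricSpace α] [MeasurableSpace α] [Countable α]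
    [MeasurableSingletonClass α] (μ ν : Measure α) : W1 μ ν ≤ W1 ν μ := by
  unfold W1
  refine le_iInf fun ξ => le_iInf fun h1 => le_iInf fun h2 => ?_
  refine iInf_le_of_le (ξ.map Prod.swap) (iInf_le_of_le ?_ (iInf_le_of_le ?_ ?_))
  · rw [Measure.map_map (measurable_of_countable _) (measurable_of_countable _)]
    exact h2
  · rw [Measure.map_map (measurable_of_countable _) (measurable_of_countable _)]
    exact h1
  · rw [lintegral_map (measurable_of_countable _) (measurable_of_countable _)]
    simp [edist_comm]

lemma W1_self_eq_zero {α : Type*} [MetricSpace α] [MeasurableSpace α] [Countable α]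
    [MeasurableSingletonClass α] (μ : Measure α) : W1 μ μ = 0 := by
  have hm : Measurable (fun a : α => (a, a)) := measurable_of_countable _
  have h1 : (μ.map (fun a : α => (a, a))).map Prod.fst = μ := by
    rw [Measure.map_map (measurable_of_countable _) hm]
    simp [Function.comp_def]
  have h2 : (μ.map (fun a : α => (a, a))).map Prod.snd = μ := by
    rw [Measure.map_map (measurable_of_countable _) hm]
    simp [Function.comp_def]
  refine le_antisymm ?_ zero_le
  refine le_trans (W1_le_coupling _ h1 h2) ?_
  rw [lintegral_map (measurable_of_countable _) hm]
  simp

lemma integrable_countable_dirac {α : Type*} [MeasurableSpace α] [Countable α]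
    [MeasurableSingletonClass α] (f : α → ℝ) (a : α) : Integrable f (Measure.dirac a) :=
  ⟨(measurable_of_countable f).aestronglyMeasurable, by
    simp [HasFiniteIntegral, lintegral_dirac]⟩

lemma integral_three {α : Type*} [MeasurableSpace α] [Countable α] [MeasurableSingletonClass α]
    (c1 c2 c3 : ℝ) (h1 : 0 ≤ c1) (h2 : 0 ≤ c2) (h3 : 0 ≤ c3) (a b c : α) (f : α → ℝ) :
    ∫ z, f z ∂(ENNReal.ofReal c1 • Measure.dirac a + ENNReal.ofReal c2 • Measure.dirac b
      + ENNReal.ofReal c3 • Measure.dirac c) = c1 * f a + c2 * f b + c3 * f c := by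
  have I : ∀ (r : ℝ) (u : α), Integrable f (ENNReal.ofReal r • Measure.dirac u) :=
    fun r u => (integrable_countable_dirac f u).smul_measure ENNReal.ofReal_ne_top
  rw [integral_add_measure ((I c1 a).add_measure (I c2 b)) (I c3 c),
    integral_add_measure (I c1 a) (I c2 b), integral_smul_measure, integral_smul_measure,
    integral_smul_measure, integral_dirac, integral_dirac, integral_dirac,
    ENNReal.toReal_ofReal h1, ENNReal.toReal_ofReal h2, ENNReal.toReal_ofReal h3]
  simp [smul_eq_mul]

lemma lintegral_three {α : Type*} [MeasurableSpace α] [MeasurableSingletonClass α]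
    (c1 c2 c3 : ℝ≥0∞) (a b c : α) (f : α → ℝ≥0∞) :
    ∫⁻ z, f z ∂(c1 • Measure.dirac a + c2 • Measure.dirac b + c3 • Measure.dirac c)
      = c1 * f a + c2 * f b + c3 * f c := by
  simp [lintegral_add_measure, lintegral_smul_measure, lintegral_dirac]

lemma edist_nat (a b : ℕ) (h : a ≤ b) : edist a b = ENNReal.ofReal ((b : ℝ) - a) := by
  rw [edist_dist, Nat.dist_eq, abs_sub_comm,
    abs_of_nonneg (sub_nonneg.mpr (by exact_mod_cast h))]

lemma coeff_nonneg {d : ℕ} {lam : ℝ} (hd : 1 ≤ d) (h0 : 0 < lam) (h1 : lam < d) {x : ℕ}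
    (hx : x ≤ d) :
    0 ≤ (lam / d) * (1 - (x : ℝ) / d) ∧ 0 ≤ (1 - lam / d) * ((x : ℝ) / d) ∧
    0 ≤ lam * (x : ℝ) / (d : ℝ) ^ 2 + (1 - lam / d) * (1 - (x : ℝ) / d) := by
  have hd0 : (0:ℝ) < d := by exact_mod_cast hd
  have hxd : (x : ℝ) ≤ d := by exact_mod_cast hx
  have hx0 : (0:ℝ) ≤ x := Nat.cast_nonneg x
  refine ⟨?_, ?_, ?_⟩
  · apply mul_nonneg (by positivity)
    rw [sub_nonneg]; exact div_le_one_of_le₀ hxd hd0.le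
  · apply mul_nonneg
    · rw [sub_nonneg]; exact div_le_one_of_le₀ h1.le hd0.le
    · positivity
  · apply add_nonneg (by positivity)
    apply mul_nonneg
    · rw [sub_nonneg]; exact div_le_one_of_le₀ h1.le hd0.le
    · rw [sub_nonneg]; exact div_le_one_of_le₀ hxd hd0.le

lemma binomialKernel_prob {d : ℕ} {lam : ℝ} (hd : 1 ≤ d) (h0 : 0 < lam) (h1 : lam < d)
    {x : ℕ} (hx : x ≤ d) : IsProbabilityMeasure (binomialKernel d lam x) := by
  obtain ⟨hp, hq, hr⟩ := coeff_nonneg hd h0 h1 hx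
  have hd0 : (0:ℝ) < d := by exact_mod_cast hd
  constructor
  simp only [binomialKernel, Measure.coe_add, Pi.add_apply, Measure.smul_apply,
    smul_eq_mul, measure_univ, mul_one]
  rw [← ENNReal.ofReal_add hp hq, ← ENNReal.ofReal_add (by linarith) hr,
    ← ENNReal.ofReal_one]
  congr 1
  field_simp
  ring

lemma binomial_diff_part {d : ℕ} {lam : ℝ} (hd : 1 ≤ d) (h0 : 0 < lam) (h1 : lam < d)
    {x : ℕ} (hx : x ≤ d) : diffSq (binomialKernel d lam) x ≤ (lam + x) / d := by
  obtain ⟨hp, hq, hr⟩ := coeff_nonneg hd h0 h1 hx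
  have hd0 : (0:ℝ) < d := by exact_mod_cast hd
  have hxd : (x : ℝ) ≤ d := by exact_mod_cast hx
  rw [diffSq]
  rw [show binomialKernel d lam x = ENNReal.ofReal ((lam / d) * (1 - (x : ℝ) / d)) • Measure.dirac (x + 1)
    + ENNReal.ofReal ((1 - lam / d) * ((x : ℝ) / d)) • Measure.dirac (x - 1)
    + ENNReal.ofReal (lam * (x : ℝ) / (d : ℝ) ^ 2
        + (1 - lam / d) * (1 - (x : ℝ) / d)) • Measure.dirac x from rfl]
  rw [integral_three _ _ _ hp hq hr]
  rw [integral_three _ _ _ hp hq hr, integral_three _ _ _ hp hq hr,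
    integral_three _ _ _ hp hq hr]
  match x, hx with
  | 0, hx =>
    have d1 : dist (0+1 : ℕ) (0 : ℕ) = 1 := by rw [Nat.dist_eq]; norm_num
    have d2 : dist (0 : ℕ) (0+1 : ℕ) = 1 := by rw [Nat.dist_eq]; norm_num
    norm_num [d1, d2]
    have h2 : 0 < lam / (d:ℝ) := by positivity
    have h3 : lam / (d:ℝ) ≤ 1 := div_le_one_of_le₀ h1.le hd0.le
    nlinarith [h2, h3]
  | (k+1), hx =>
    have e1 : ((k+1) - 1 : ℕ) = k := rfl
    rw [e1]
    have d1 : dist ((k+1)+1 : ℕ) (k : ℕ) = 2 := by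
      rw [Nat.dist_eq]; push_cast; rw [abs_of_nonneg] <;> linarith
    have d2 : dist (k : ℕ) ((k+1)+1 : ℕ) = 2 := by
      rw [Nat.dist_eq]; push_cast; rw [abs_of_nonpos] <;> linarith
    have d3 : dist ((k+1)+1 : ℕ) ((k+1) : ℕ) = 1 := by
      rw [Nat.dist_eq]; push_cast; rw [abs_of_nonneg] <;> linarith
    have d4 : dist ((k+1) : ℕ) ((k+1)+1 : ℕ) = 1 := by
      rw [Nat.dist_eq]; push_cast; rw [abs_of_nonpos] <;> linarith
    have d5 : dist (k : ℕ) ((k+1) : ℕ) = 1 := by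
      rw [Nat.dist_eq]; push_cast; rw [abs_of_nonpos] <;> linarith
    have d6 : dist ((k+1) : ℕ) (k : ℕ) = 1 := by
      rw [Nat.dist_eq]; push_cast; rw [abs_of_nonneg] <;> linarith
    simp only [d1, d2, d3, d4, d5, d6, dist_self]
    set X := ((k+1 : ℕ) : ℝ) with hXdef
    have hid : (lam + X) / d - ((1:ℝ)/2) *
        ((lam / d * (1 - X / d)) * ((lam / d * (1 - X / d))*0^2 + ((1 - lam / d) * (X / d))*2^2
            + (lam * X / (d:ℝ)^2 + (1 - lam / d) * (1 - X / d))*1^2)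
          + ((1 - lam / d) * (X / d)) * ((lam / d * (1 - X / d))*2^2 + ((1 - lam / d) * (X / d))*0^2
            + (lam * X / (d:ℝ)^2 + (1 - lam / d) * (1 - X / d))*1^2)
          + (lam * X / (d:ℝ)^2 + (1 - lam / d) * (1 - X / d)) * ((lam / d * (1 - X / d))*1^2
            + ((1 - lam / d) * (X / d))*1^2 + (lam * X / (d:ℝ)^2 + (1 - lam / d) * (1 - X / d))*0^2))
        = 2*lam*X/(d:ℝ)^2 + ((lam / d * (1 - X / d)) - ((1 - lam / d) * (X / d)))^2 := by
      field_simp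
      ring
    have hXpos : (0:ℝ) ≤ X := by positivity
    have h2 : (0:ℝ) ≤ 2*lam*X/(d:ℝ)^2 := by positivity
    linarith [hid, h2, sq_nonneg ((lam / d * (1 - X / d)) - ((1 - lam / d) * (X / d)))]

lemma binomial_curv_gap {d : ℕ} {lam : ℝ} (hd : 1 ≤ d) (h0 : 0 < lam) (h1 : lam < d)
    {x y : ℕ} (hx : x ≤ d) (hy : y ≤ d) (hxy : x + 2 ≤ y) :
    W1 (binomialKernel d lam x) (binomialKernel d lam y)
      ≤ ENNReal.ofReal ((1 - 1/(d:ℝ)) * ((y:ℝ) - x)) := by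
  obtain ⟨hpx, hqx, hrx⟩ := coeff_nonneg hd h0 h1 hx
  obtain ⟨hpy, hqy, hry⟩ := coeff_nonneg hd h0 h1 hy
  have hd0 : (0:ℝ) < d := by exact_mod_cast hd
  have hxd : (x : ℝ) ≤ d := by exact_mod_cast hx
  have hyd : (y : ℝ) ≤ d := by exact_mod_cast hy
  have hxyR : (x : ℝ) + 2 ≤ y := by exact_mod_cast hxy
  have hyd1 : (y:ℝ)/d ≤ 1 := div_le_one_of_le₀ hyd hd0.le
  have hld : 0 < lam/(d:ℝ) := div_pos h0 hd0
  haveI := binomialKernel_prob hd h0 h1 hx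
  haveI := binomialKernel_prob hd h0 h1 hy
  have hmean : ∀ a : ℕ, a + 1 ≤ y →
      ∫⁻ b, edist a b ∂(binomialKernel d lam y)
        = ENNReal.ofReal ((y:ℝ) - y/d + lam/d - a) := by
    intro a ha
    have haR : (a : ℝ) + 1 ≤ y := by exact_mod_cast ha
    rw [show binomialKernel d lam y
      = ENNReal.ofReal ((lam / d) * (1 - (y : ℝ) / d)) • Measure.dirac (y + 1)
        + ENNReal.ofReal ((1 - lam / d) * ((y : ℝ) / d)) • Measure.dirac (y - 1)
        + ENNReal.ofReal (lam * (y : ℝ) / (d : ℝ) ^ 2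
            + (1 - lam / d) * (1 - (y : ℝ) / d)) • Measure.dirac y from rfl,
      lintegral_three]
    rw [edist_nat a (y+1) (by omega), edist_nat a (y-1) (by omega), edist_nat a y (by omega)]
    have hy1 : ((y-1:ℕ):ℝ) = (y:ℝ) - 1 := by
      rw [Nat.cast_sub (by omega)]; norm_num
    have c1 : (0:ℝ) ≤ ((y+1:ℕ):ℝ) - a := sub_nonneg.mpr (Nat.cast_le.mpr (by omega))
    have c2 : (0:ℝ) ≤ ((y-1:ℕ):ℝ) - a := sub_nonneg.mpr (Nat.cast_le.mpr (by omega))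
    have c3 : (0:ℝ) ≤ ((y:ℕ):ℝ) - a := sub_nonneg.mpr (Nat.cast_le.mpr (by omega))
    rw [← ENNReal.ofReal_mul hpy, ← ENNReal.ofReal_mul hqy, ← ENNReal.ofReal_mul hry,
      ← ENNReal.ofReal_add (mul_nonneg hpy c1) (mul_nonneg hqy c2),
      ← ENNReal.ofReal_add (add_nonneg (mul_nonneg hpy c1) (mul_nonneg hqy c2))
        (mul_nonneg hry c3)]
    congr 1
    rw [hy1]
    push_cast
    field_simp
    ring
  refine le_trans (W1_le_coupling ((binomialKernel d lam x).prod (binomialKernel d lam y))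
    (by simp) (by simp)) ?_
  rw [lintegral_prod _ ((measurable_of_countable _).aemeasurable)]
  rw [show binomialKernel d lam x
    = ENNReal.ofReal ((lam / d) * (1 - (x : ℝ) / d)) • Measure.dirac (x + 1)
      + ENNReal.ofReal ((1 - lam / d) * ((x : ℝ) / d)) • Measure.dirac (x - 1)
      + ENNReal.ofReal (lam * (x : ℝ) / (d : ℝ) ^ 2
          + (1 - lam / d) * (1 - (x : ℝ) / d)) • Measure.dirac x from rfl,
    lintegral_three]
  rw [hmean (x+1) (by omega), hmean (x-1) (by omega), hmean x (by omega)]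
  have hx1a : ((x-1:ℕ):ℝ) ≤ x := by exact_mod_cast Nat.sub_le x 1
  have hx1b : (x:ℝ) - 1 ≤ ((x-1:ℕ):ℝ) := by
    have h' : x ≤ (x-1) + 1 := by omega
    have h'' := (Nat.cast_le (α := ℝ)).mpr h'
    push_cast at h''
    linarith
  have hM1 : (0:ℝ) ≤ (y:ℝ) - y/d + lam/d - ((x+1:ℕ):ℝ) := by
    push_cast; linarith
  have hM3 : (0:ℝ) ≤ (y:ℝ) - y/d + lam/d - (x:ℝ) := by linarith
  have hM2 : (0:ℝ) ≤ (y:ℝ) - y/d + lam/d - ((x-1:ℕ):ℝ) := by linarith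
  rw [← ENNReal.ofReal_mul hpx, ← ENNReal.ofReal_mul hqx, ← ENNReal.ofReal_mul hrx,
    ← ENNReal.ofReal_add (mul_nonneg hpx hM1) (mul_nonneg hqx hM2),
    ← ENNReal.ofReal_add (add_nonneg (mul_nonneg hpx hM1) (mul_nonneg hqx hM2))
      (mul_nonneg hrx hM3)]
  apply ENNReal.ofReal_le_ofReal
  have key : 0 ≤ ((1 - lam / d) * ((x : ℝ) / d)) * (((x-1:ℕ):ℝ) - ((x:ℝ) - 1)) :=
    mul_nonneg hqx (by linarith)
  have hgoal : (lam / d) * (1 - (x : ℝ) / d) * (((y:ℝ) - y/d + lam/d) - ((x+1:ℕ):ℝ))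
      + ((1 - lam / d) * ((x : ℝ) / d)) * (((y:ℝ) - y/d + lam/d) - ((x:ℝ)-1))
      + (lam * (x : ℝ) / (d : ℝ) ^ 2 + (1 - lam / d) * (1 - (x : ℝ) / d))
          * (((y:ℝ) - y/d + lam/d) - (x:ℝ))
      = (1 - 1/(d:ℝ)) * ((y:ℝ) - x) := by
    push_cast
    field_simp
    ring
  nlinarith [key, hgoal]

set_option linter.unnecessarySeqFocus false in
lemma binomial_curv_adj {d : ℕ} {lam : ℝ} (hd : 1 ≤ d) (h0 : 0 < lam) (h1 : lam < d)
    {x : ℕ} (hx : x + 1 ≤ d) :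
    W1 (binomialKernel d lam x) (binomialKernel d lam (x+1))
      ≤ ENNReal.ofReal ((1 - 1/(d:ℝ)) * (((x+1:ℕ):ℝ) - x)) := by
  have hd0 : (0:ℝ) < d := by exact_mod_cast hd
  have hxd : (x : ℝ) + 1 ≤ d := by exact_mod_cast hx
  have hx0 : (0:ℝ) ≤ x := Nat.cast_nonneg x
  have hl1 : lam / (d:ℝ) ≤ 1 := div_le_one_of_le₀ h1.le hd0.le
  set w1 : ℝ := (1 - lam/d) * ((x:ℝ)/d) with hw1d
  set w2 : ℝ := (1 - lam/d) * (1/d) with hw2d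
  set w3 : ℝ := lam*(x:ℝ)/(d:ℝ)^2 + (1-lam/d)*(1-(x:ℝ)/d) - (1 - lam/d) * (1/d) with hw3d
  set w4 : ℝ := lam/(d:ℝ)^2 with hw4d
  set w5 : ℝ := lam/d * (1 - ((x:ℝ)+1)/d) with hw5d
  have hnn1 : 0 ≤ w1 := by rw [hw1d]; apply mul_nonneg <;> [skip; positivity]
    <;> nlinarith
  have hnn2 : 0 ≤ w2 := by rw [hw2d]; apply mul_nonneg (by nlinarith) (by positivity)
  have hnn3 : 0 ≤ w3 := by
    rw [hw3d]
    have e : lam*(x:ℝ)/(d:ℝ)^2 + (1-lam/d)*(1-(x:ℝ)/d) - (1 - lam/d) * (1/d)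
        = lam*(x:ℝ)/(d:ℝ)^2 + (1-lam/d)*((d - 1 - (x:ℝ))/d) := by field_simp; ring
    rw [e]
    apply add_nonneg (by positivity)
    apply mul_nonneg (by nlinarith)
    apply div_nonneg (by linarith) hd0.le
  have hnn4 : 0 ≤ w4 := by rw [hw4d]; positivity
  have hnn5 : 0 ≤ w5 := by
    rw [hw5d]
    apply mul_nonneg (by positivity)
    nlinarith [div_le_one_of_le₀ hxd hd0.le]
  set ξ : Measure (ℕ × ℕ) :=
    ENNReal.ofReal w1 • Measure.dirac (x-1, x) + ENNReal.ofReal w2 • Measure.dirac (x, x)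
    + ENNReal.ofReal w3 • Measure.dirac (x, x+1)
    + ENNReal.ofReal w4 • Measure.dirac (x+1, x+1)
    + ENNReal.ofReal w5 • Measure.dirac (x+1, x+2) with hxi
  have hmf : Measurable (Prod.fst : ℕ×ℕ → ℕ) := measurable_of_countable _
  have hms : Measurable (Prod.snd : ℕ×ℕ → ℕ) := measurable_of_countable _
  have hfst : ξ.map Prod.fst = binomialKernel d lam x := by
    rw [hxi]
    rw [Measure.map_add _ _ hmf, Measure.map_add _ _ hmf, Measure.map_add _ _ hmf,
      Measure.map_add _ _ hmf]
    simp only [Measure.map_smul, Measure.map_dirac' hmf]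
    rw [show binomialKernel d lam x
      = ENNReal.ofReal ((lam / d) * (1 - (x : ℝ) / d)) • Measure.dirac (x + 1)
        + ENNReal.ofReal ((1 - lam / d) * ((x : ℝ) / d)) • Measure.dirac (x - 1)
        + ENNReal.ofReal (lam * (x : ℝ) / (d : ℝ) ^ 2
            + (1 - lam / d) * (1 - (x : ℝ) / d)) • Measure.dirac x from rfl]
    have er : ENNReal.ofReal (lam * (x : ℝ) / (d : ℝ) ^ 2 + (1 - lam / d) * (1 - (x : ℝ) / d))
        = ENNReal.ofReal w2 + ENNReal.ofReal w3 := by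
      rw [← ENNReal.ofReal_add hnn2 hnn3, hw2d, hw3d]; ring_nf
    have ep : ENNReal.ofReal ((lam / d) * (1 - (x : ℝ) / d))
        = ENNReal.ofReal w4 + ENNReal.ofReal w5 := by
      rw [← ENNReal.ofReal_add hnn4 hnn5, hw4d, hw5d]
      congr 1
      field_simp
      ring
    rw [er, ep, add_smul, add_smul]
    abel
  have hsnd : ξ.map Prod.snd = binomialKernel d lam (x+1) := by
    rw [hxi]
    rw [Measure.map_add _ _ hms, Measure.map_add _ _ hms, Measure.map_add _ _ hms,
      Measure.map_add _ _ hms]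
    simp only [Measure.map_smul, Measure.map_dirac' hms]
    rw [show binomialKernel d lam (x+1)
      = ENNReal.ofReal ((lam / d) * (1 - ((x+1:ℕ) : ℝ) / d)) • Measure.dirac ((x+1) + 1)
        + ENNReal.ofReal ((1 - lam / d) * (((x+1:ℕ) : ℝ) / d)) • Measure.dirac ((x+1) - 1)
        + ENNReal.ofReal (lam * ((x+1:ℕ) : ℝ) / (d : ℝ) ^ 2
            + (1 - lam / d) * (1 - ((x+1:ℕ) : ℝ) / d)) • Measure.dirac (x+1) from rfl]
    have e1 : ((x+1) - 1 : ℕ) = x := rfl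
    have e2 : ((x+1) + 1 : ℕ) = x + 2 := rfl
    rw [e1, e2]
    have eq' : ENNReal.ofReal ((1 - lam / d) * (((x+1:ℕ) : ℝ) / d))
        = ENNReal.ofReal w1 + ENNReal.ofReal w2 := by
      rw [← ENNReal.ofReal_add hnn1 hnn2, hw1d, hw2d]
      congr 1
      push_cast
      field_simp
    have er' : ENNReal.ofReal (lam * ((x+1:ℕ) : ℝ) / (d : ℝ) ^ 2
          + (1 - lam / d) * (1 - ((x+1:ℕ) : ℝ) / d))
        = ENNReal.ofReal w3 + ENNReal.ofReal w4 := by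
      rw [← ENNReal.ofReal_add hnn3 hnn4, hw3d, hw4d]
      congr 1
      push_cast
      field_simp
      ring
    have ep' : ENNReal.ofReal ((lam / d) * (1 - ((x+1:ℕ) : ℝ) / d)) = ENNReal.ofReal w5 := by
      rw [hw5d]
      congr 1
      push_cast
      ring
    rw [eq', er', ep', add_smul, add_smul]
    abel
  refine le_trans (W1_le_coupling ξ hfst hsnd) ?_
  rw [hxi]
  simp only [lintegral_add_measure, lintegral_smul_measure, lintegral_dirac]
  simp only [smul_eq_mul, edist_self, mul_zero, add_zero, zero_add]
  rw [edist_nat x (x+1) (by omega), edist_nat (x+1) (x+2) (by omega)]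
  have hb1 : edist ((x-1 : ℕ)) x ≤ ENNReal.ofReal 1 := by
    rw [edist_nat (x-1) x (by omega)]
    apply ENNReal.ofReal_le_ofReal
    have h' : x ≤ (x-1) + 1 := by omega
    have h'' := (Nat.cast_le (α := ℝ)).mpr h'
    push_cast at h''
    linarith
  have hb2 : ENNReal.ofReal ((((x+1:ℕ)):ℝ) - x) ≤ ENNReal.ofReal 1 := by
    apply ENNReal.ofReal_le_ofReal
    push_cast; norm_num
  have hb3 : ENNReal.ofReal ((((x+2:ℕ)):ℝ) - ((x+1:ℕ):ℝ)) ≤ ENNReal.ofReal 1 := by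
    apply ENNReal.ofReal_le_ofReal
    push_cast; norm_num
  calc ENNReal.ofReal w1 * edist ((x-1:ℕ)) x + ENNReal.ofReal w3 * ENNReal.ofReal (((x+1:ℕ):ℝ) - x)
        + ENNReal.ofReal w5 * ENNReal.ofReal (((x+2:ℕ):ℝ) - ((x+1:ℕ):ℝ))
      ≤ ENNReal.ofReal w1 * ENNReal.ofReal 1 + ENNReal.ofReal w3 * ENNReal.ofReal 1
        + ENNReal.ofReal w5 * ENNReal.ofReal 1 := by
        gcongr
    _ = ENNReal.ofReal (w1 * 1 + w3 * 1 + w5 * 1) := by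
        rw [← ENNReal.ofReal_mul hnn1, ← ENNReal.ofReal_mul hnn3, ← ENNReal.ofReal_mul hnn5,
          ← ENNReal.ofReal_add (by nlinarith) (by nlinarith),
          ← ENNReal.ofReal_add (by nlinarith) (by nlinarith)]
    _ ≤ ENNReal.ofReal ((1 - 1/(d:ℝ)) * (((x+1:ℕ):ℝ) - x)) := by
        apply ENNReal.ofReal_le_ofReal
        apply le_of_eq
        rw [hw1d, hw3d, hw5d]
        have hdne : (d:ℝ) ≠ 0 := hd0.ne'
        push_cast
        field_simp
        ring

end BinomialAux

/-- **Curvature and diffusion constant of the binomial Markov chain** (Section 2.3 of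
Joulin–Ollivier): for `0 < λ < d`, the binomial chain on `{0,…,d}` has Ricci curvature
`κ ≥ 1/d`, i.e. `W₁(P_x,P_y) ≤ (1 − 1/d)|x−y|`, and `σ(x)² ≤ (λ+x)/d`. -/
theorem binomial_chain_curvature_and_diffusion
    (d : ℕ) (hd : 1 ≤ d) (lam : ℝ) (hlam0 : 0 < lam) (hlam1 : lam < d) :
    (∀ x y : ℕ, x ≤ d → y ≤ d →
      W1 (binomialKernel d lam x) (binomialKernel d lam y)
        ≤ ENNReal.ofReal ((1 - 1 / (d : ℝ)) * dist x y)) ∧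
    (∀ x : ℕ, x ≤ d →
      diffSq (binomialKernel d lam) x ≤ (lam + x) / d) := by
  have hd0 : (0:ℝ) < d := by exact_mod_cast hd
  have key : ∀ x y : ℕ, x ≤ d → y ≤ d → x ≤ y →
      W1 (binomialKernel d lam x) (binomialKernel d lam y)
        ≤ ENNReal.ofReal ((1 - 1/(d:ℝ)) * ((y:ℝ) - x)) := by
    intro x y hx hy hxy
    rcases eq_or_lt_of_le hxy with rfl | hlt
    · rw [W1_self_eq_zero]
      exact zero_le
    · rcases eq_or_lt_of_le (Nat.succ_le_of_lt hlt) with heq | hlt2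
      · subst heq
        exact binomial_curv_adj hd hlam0 hlam1 hy
      · exact binomial_curv_gap hd hlam0 hlam1 hx hy (by omega)
  constructor
  · intro x y hx hy
    rcases le_total x y with h | h
    · refine le_trans (key x y hx hy h) ?_
      apply le_of_eq
      congr 1
      rw [Nat.dist_eq, abs_sub_comm, abs_of_nonneg (sub_nonneg.mpr (by exact_mod_cast h))]
    · refine le_trans (W1_symm_le _ _) ?_
      refine le_trans (key y x hy hx h) ?_
      apply le_of_eq
      congr 1
      rw [Nat.dist_eq, abs_of_nonneg (sub_nonneg.mpr (by exact_mod_cast h))]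
  · intro x hx
    exact binomial_diff_part hd hlam0 hlam1 hx


end
end
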